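/- arXiv:0709.3208 — 2 statements merged into one kernel-verified Lean document; each statement's English description precedes it below -/
import Mathlib

section
/- Let λ > 0 be a real number with λ ≠ 1. Then for every integer w ≥ 1 and every integer n ≥ 0, the partition function of loops satisfies Z_{n,w}(1+λ², 1+λ^{−2}) = ((1−λ²)/(2λ²)) · (λ^{2w}/(1−λ^{2w})) · (λ+λ^{−1})ⁿ · (1+(−1)ⁿ) + (2ⁿ/(λw)) · Σ_{k=1}^{w−1} [ ((λ+λ^{−1})/2) · sin²(kπ/w) / ( ((λ−λ^{−1})/2)² + sin²(kπ/w) ) ] · cosⁿ(kπ/w). -/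
def IsLoop {n w : ℕ} (h : Fin (n + 1) → Fin (w + 1)) : Prop :=
  h 0 = 0 ∧ h (Fin.last n) = 0 ∧
    ∀ i : Fin n, |((h i.succ : ℤ) - (h i.castSucc : ℤ))| = 1

instance {n w : ℕ} (h : Fin (n + 1) → Fin (w + 1)) : Decidable (IsLoop h) := by
  unfold IsLoop; infer_instance

noncomputable def Z (n w : ℕ) (a b : ℝ) : ℝ :=
  ∑ h : Fin (n + 1) → Fin (w + 1),
    if IsLoop h then
      a ^ (Finset.univ.filter fun i : Fin (n + 1) => i ≠ 0 ∧ (h i : ℕ) = 0).card *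
      b ^ (Finset.univ.filter fun i : Fin (n + 1) => (h i : ℕ) = w).card
    else 0

namespace ZAux
open Matrix

theorem pow_apply_eq_sum_paths {α : Type*} [Fintype α] [DecidableEq α]
    (M : Matrix α α ℝ) (n : ℕ) (i j : α) :
    (M ^ n) i j = ∑ h : Fin (n+1) → α,
      if h 0 = i ∧ h (Fin.last n) = j then
        ∏ t : Fin n, M (h t.castSucc) (h t.succ) else 0 := by
  induction n generalizing i with
  | zero =>
      rw [pow_zero]
      rw [← (Equiv.funUnique (Fin 1) α).symm.sum_comp]
      simp only [Equiv.funUnique_symm_apply, Matrix.one_apply, Finset.univ_eq_empty,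
        Finset.prod_empty]
      by_cases hij : i = j
      · subst hij
        simp
      · rw [if_neg hij]
        refine (Finset.sum_eq_zero fun x _ => ?_).symm
        rw [if_neg]
        rintro ⟨rfl, rfl⟩
        exact hij rfl
  | succ n ih =>
      rw [pow_succ', Matrix.mul_apply]
      calc (∑ m, M i m * (M ^ n) m j)
          = ∑ m, ∑ g : Fin (n+1) → α,
              if g 0 = m ∧ g (Fin.last n) = j then
                M i m * ∏ t : Fin n, M (g t.castSucc) (g t.succ) else 0 := by
            refine Finset.sum_congr rfl fun m _ => ?_
            rw [ih m, Finset.mul_sum]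
            refine Finset.sum_congr rfl fun g _ => ?_
            split_ifs <;> simp
        _ = ∑ g : Fin (n+1) → α, if g (Fin.last n) = j then
              M i (g 0) * ∏ t : Fin n, M (g t.castSucc) (g t.succ) else 0 := by
            rw [Finset.sum_comm]
            refine Finset.sum_congr rfl fun g _ => ?_
            by_cases hP : g (Fin.last n) = j
            · simp [hP]
            · simp [hP]
        _ = ∑ h : Fin (n+2) → α, if h 0 = i ∧ h (Fin.last (n+1)) = j then
              ∏ t : Fin (n+1), M (h t.castSucc) (h t.succ) else 0 := by
            rw [← (Fin.consEquiv (fun _ : Fin (n+2) => α)).sum_comp, Fintype.sum_prod_type]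
            simp only [Fin.consEquiv_apply]
            have hcons : ∀ (x : α) (g : Fin (n+1) → α),
                (if (Fin.cons x g : Fin (n+2) → α) 0 = i ∧
                    (Fin.cons x g : Fin (n+2) → α) (Fin.last (n+1)) = j then
                  ∏ t : Fin (n+1), M ((Fin.cons x g : Fin (n+2) → α) t.castSucc)
                    ((Fin.cons x g : Fin (n+2) → α) t.succ) else 0)
                = if x = i ∧ g (Fin.last n) = j then
                    M x (g 0) * ∏ t : Fin n, M (g t.castSucc) (g t.succ) else 0 := by
              intro x g
              have h0 : (Fin.cons x g : Fin (n+2) → α) 0 = x := rfl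
              have hlast : (Fin.cons x g : Fin (n+2) → α) (Fin.last (n+1)) = g (Fin.last n) := by
                rw [← Fin.succ_last, Fin.cons_succ]
              have hprod : (∏ t : Fin (n+1),
                    M ((Fin.cons x g : Fin (n+2) → α) t.castSucc)
                      ((Fin.cons x g : Fin (n+2) → α) t.succ))
                  = M x (g 0) * ∏ t : Fin n, M (g t.castSucc) (g t.succ) := by
                rw [Fin.prod_univ_succ]
                simp only [Fin.castSucc_zero, Fin.cons_zero, Fin.cons_succ, ← Fin.succ_castSucc]
              rw [h0, hlast, hprod]
            simp_rw [hcons]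
            rw [Finset.sum_comm]
            refine Finset.sum_congr rfl fun g _ => ?_
            by_cases hP : g (Fin.last n) = j
            · simp [hP]
            · simp [hP]




def S (a b : ℝ) (w : ℕ) (j : ℕ) : ℝ := if j = 0 then a else if j = w then b else 1

def TM (a b : ℝ) (w : ℕ) : Matrix (Fin (w+1)) (Fin (w+1)) ℝ :=
  fun i j => if ((i:ℕ) = (j:ℕ) + 1 ∨ (j:ℕ) = (i:ℕ) + 1) then S a b w (j:ℕ) else 0

noncomputable def th (w k : ℕ) : ℝ := k * Real.pi / w

noncomputable def uf (lam : ℝ) (w k : ℕ) (j : ℕ) : ℝ :=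
  if k = 0 then lam⁻¹ ^ j
  else if k = w then (-lam⁻¹) ^ j
  else Real.cos (th w k) * (1 - lam ^ 2) * Real.sin (th w k * j)
    + Real.sin (th w k) * (1 + lam ^ 2) * Real.cos (th w k * j)

noncomputable def ev (lam : ℝ) (w k : ℕ) : ℝ :=
  if k = 0 then lam + lam⁻¹ else if k = w then -(lam + lam⁻¹) else 2 * Real.cos (th w k)

lemma neighbor_sum (w : ℕ) (jv : ℕ) (f : ℕ → ℝ) (hjv : jv ≤ w) :
    (∑ i ∈ Finset.range (w+1), if (jv = i + 1 ∨ i = jv + 1) then f i else 0)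
    = (if 1 ≤ jv then f (jv - 1) else 0) + (if jv + 1 ≤ w then f (jv + 1) else 0) := by
  have split : ∀ i, (if (jv = i + 1 ∨ i = jv + 1) then f i else 0)
      = (if jv = i + 1 then f i else 0) + (if i = jv + 1 then f i else 0) := by
    intro i
    by_cases h1 : jv = i + 1
    · by_cases h2 : i = jv + 1
      · omega
      · rw [if_pos (Or.inl h1), if_pos h1, if_neg h2, add_zero]
    · by_cases h2 : i = jv + 1
      · rw [if_pos (Or.inr h2), if_neg h1, if_pos h2, zero_add]
      · rw [if_neg (by tauto), if_neg h1, if_neg h2, add_zero]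
  rw [Finset.sum_congr rfl (fun i _ => split i), Finset.sum_add_distrib]
  congr 1
  · cases jv with
    | zero => simp
    | succ m =>
      rw [if_pos (by omega)]
      have h2 : ∀ i, (if m + 1 = i + 1 then f i else 0) = if i = m then f i else 0 := by
        intro i
        by_cases h : i = m
        · rw [if_pos (by omega), if_pos h, h]
        · rw [if_neg (by omega), if_neg h]
      rw [Finset.sum_congr rfl (fun i _ => h2 i),
        Finset.sum_ite_eq' (Finset.range (w+1)) m f,
        if_pos (by simp only [Finset.mem_range]; omega)]
      simp
  · rw [Finset.sum_ite_eq' (Finset.range (w+1)) (jv+1) f]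
    by_cases hm : jv + 1 ≤ w
    · rw [if_pos (by simp; omega), if_pos hm]
    · rw [if_neg (by simp; omega), if_neg hm]

lemma uf_rec (lam : ℝ) (hlam : lam ≠ 0) (w k : ℕ) (j : ℕ) :
    uf lam w k j + uf lam w k (j+2) = ev lam w k * uf lam w k (j+1) := by
  unfold uf ev
  split_ifs with h0 hw'
  · linear_combination (-(lam⁻¹ ^ j)) * mul_inv_cancel₀ hlam
  · linear_combination (-((-lam⁻¹) ^ j)) * mul_inv_cancel₀ hlam
  · push_cast
    rw [show th w k * ((j:ℝ)) = th w k * ((j:ℝ)+1) - th w k by ring,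
        show th w k * ((j:ℝ)+2) = th w k * ((j:ℝ)+1) + th w k by ring,
        Real.sin_sub, Real.cos_sub, Real.sin_add, Real.cos_add]
    ring

lemma uf_bc0 (lam : ℝ) (hlam : lam ≠ 0) (w k : ℕ) :
    (1 + lam ^ 2) * uf lam w k 1 = ev lam w k * uf lam w k 0 := by
  unfold uf ev
  split_ifs with h0 hw'
  · field_simp; ring
  · field_simp; ring
  · push_cast
    simp only [Nat.cast_one, Nat.cast_zero, mul_one, mul_zero, Real.sin_zero, Real.cos_zero]
    ring

lemma uf_bcw (lam : ℝ) (hlam : lam ≠ 0) (m k : ℕ) :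
    (1 + lam⁻¹ ^ 2) * uf lam (m+1) k m = ev lam (m+1) k * uf lam (m+1) k (m+1) := by
  unfold uf ev
  split_ifs with h0 hw'
  · linear_combination (-(lam⁻¹ ^ m)) * mul_inv_cancel₀ hlam
  · linear_combination (-((-lam⁻¹) ^ m)) * mul_inv_cancel₀ hlam
  · have hw1 : ((m:ℝ)+1) ≠ 0 := by positivity
    have hθ : th (m+1) k * ((m:ℝ)+1) = k * Real.pi := by
      unfold th; push_cast; field_simp
    push_cast
    rw [show th (m+1) k * ((m:ℝ)) = (k:ℝ) * Real.pi - th (m+1) k by rw [← hθ]; ring, hθ]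
    rw [Real.sin_nat_mul_pi, Real.cos_nat_mul_pi_sub, Real.sin_nat_mul_pi_sub]
    have h1 : Real.cos (k * Real.pi) = (-1) ^ k := by
      have := Real.cos_nat_mul_pi_sub 0 k
      simpa using this
    rw [h1]
    have hc : lam * lam⁻¹ = 1 := mul_inv_cancel₀ hlam
    linear_combination (2 * ((-1:ℝ)^k) * Real.sin (th (m+1) k) * Real.cos (th (m+1) k) *
      (lam * lam⁻¹ + 1)) * hc

noncomputable def Vv (lam : ℝ) (w : ℕ) (k : ℕ) : Fin (w+1) → ℝ :=
  fun j => uf lam w k (j:ℕ) / S (1+lam^2) (1+lam⁻¹^2) w (j:ℕ)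

noncomputable def Uv (lam : ℝ) (w : ℕ) (k : ℕ) : Fin (w+1) → ℝ :=
  fun j => uf lam w k (j:ℕ)

lemma S_pos (lam : ℝ) (hlam : lam ≠ 0) (w : ℕ) (j : ℕ) :
    0 < S (1+lam^2) (1+lam⁻¹^2) w j := by
  unfold S
  split_ifs <;> positivity

lemma mulVec_eigen (lam : ℝ) (hlam : lam ≠ 0) (w : ℕ) (hw : 1 ≤ w) (k : ℕ) :
    TM (1+lam^2) (1+lam⁻¹^2) w *ᵥ Vv lam w k = ev lam w k • Vv lam w k := by
  set a := 1 + lam^2 with ha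
  set b := 1 + lam⁻¹^2 with hb
  funext j
  have hterm : ∀ i : Fin (w+1), TM a b w j i * Vv lam w k i
      = if ((j:ℕ) = (i:ℕ)+1 ∨ (i:ℕ) = (j:ℕ)+1) then uf lam w k (i:ℕ) else 0 := by
    intro i
    show (if _ then S a b w (i:ℕ) else 0) * (uf lam w k (i:ℕ) / S a b w (i:ℕ)) = _
    split_ifs with hadj
    · rw [mul_comm, div_mul_cancel₀ _ (ne_of_gt (S_pos lam hlam w (i:ℕ)))]
    · exact zero_mul _
  have hL : (TM a b w *ᵥ Vv lam w k) j
      = ∑ i ∈ Finset.range (w+1), if ((j:ℕ) = i+1 ∨ i = (j:ℕ)+1) then uf lam w k i else 0 := by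
    rw [Matrix.mulVec, dotProduct]
    rw [Finset.sum_congr rfl (fun i _ => hterm i)]
    exact Fin.sum_univ_eq_sum_range (fun i => if ((j:ℕ) = i+1 ∨ i = (j:ℕ)+1)
      then uf lam w k i else 0) (w+1)
  have hjv : (j:ℕ) ≤ w := Nat.lt_succ_iff.mp j.isLt
  rw [hL, neighbor_sum w (j:ℕ) _ hjv]
  show _ = ev lam w k * (uf lam w k (j:ℕ) / S a b w (j:ℕ))
  have hbc0 := uf_bc0 lam hlam w k
  have hane : a ≠ 0 := ne_of_gt (by positivity)
  have hbne : b ≠ 0 := ne_of_gt (by positivity)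
  rcases Nat.eq_zero_or_pos (j:ℕ) with hj0 | hj1
  · rw [hj0]
    rw [if_neg (by omega), if_pos (by omega)]
    have hS : S a b w 0 = a := by unfold S; rw [if_pos rfl]
    rw [hS, zero_add, ← mul_div_assoc, eq_div_iff hane]
    linear_combination hbc0
  · rcases Nat.lt_or_ge (j:ℕ) w with hjw | hjw
    · -- interior
      rw [if_pos (by omega : 1 ≤ (j:ℕ)), if_pos (by omega)]
      have hS : S a b w (j:ℕ) = 1 := by unfold S; rw [if_neg (by omega), if_neg (by omega)]
      rw [hS, div_one]
      obtain ⟨m, hm⟩ : ∃ m, (j:ℕ) = m + 1 := ⟨(j:ℕ) - 1, by omega⟩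
      rw [hm]
      have := uf_rec lam hlam w k m
      rw [show m + 1 - 1 = m from rfl, show m + 1 + 1 = m + 2 from rfl]
      linarith [this]
    · -- j = w
      have hjw' : (j:ℕ) = w := le_antisymm hjv hjw
      rw [hjw', if_pos (by omega), if_neg (by omega), add_zero]
      have hS : S a b w w = b := by unfold S; rw [if_neg (by omega), if_pos rfl]
      rw [hS]
      obtain ⟨m, hm⟩ : ∃ m, w = m + 1 := ⟨w - 1, by omega⟩
      have hbcw := uf_bcw lam hlam m k
      rw [hm, show m + 1 - 1 = m from rfl]
      rw [← mul_div_assoc, eq_div_iff hbne]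
      linear_combination hbcw

lemma TM_symm_rel (a b : ℝ) (w : ℕ) (i j : Fin (w+1)) :
    TM a b w i j * S a b w (i:ℕ) = TM a b w j i * S a b w (j:ℕ) := by
  show (if ((i:ℕ) = (j:ℕ)+1 ∨ (j:ℕ) = (i:ℕ)+1) then S a b w (j:ℕ) else 0) * S a b w (i:ℕ)
    = (if ((j:ℕ) = (i:ℕ)+1 ∨ (i:ℕ) = (j:ℕ)+1) then S a b w (i:ℕ) else 0) * S a b w (j:ℕ)
  split_ifs with h1 h2
  · ring
  · exact absurd (Or.symm h1) h2
  · exact absurd (Or.symm (by assumption)) h1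
  · ring

lemma mulVec_transpose_eigen (lam : ℝ) (hlam : lam ≠ 0) (w : ℕ) (hw : 1 ≤ w) (k : ℕ) :
    (TM (1+lam^2) (1+lam⁻¹^2) w)ᵀ *ᵥ Uv lam w k = ev lam w k • Uv lam w k := by
  set a := 1 + lam^2 with ha
  set b := 1 + lam⁻¹^2 with hb
  have hUv : ∀ i : Fin (w+1), Uv lam w k i = S a b w (i:ℕ) * Vv lam w k i := by
    intro i
    show uf lam w k (i:ℕ) = S a b w (i:ℕ) * (uf lam w k (i:ℕ) / S a b w (i:ℕ))
    rw [mul_comm, div_mul_cancel₀ _ (ne_of_gt (S_pos lam hlam w (i:ℕ)))]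
  funext j
  calc ((TM a b w)ᵀ *ᵥ Uv lam w k) j
      = ∑ i, TM a b w i j * (S a b w (i:ℕ) * Vv lam w k i) := by
        rw [Matrix.mulVec, dotProduct]
        exact Finset.sum_congr rfl fun i _ => by rw [Matrix.transpose_apply, ← hUv]
    _ = ∑ i, S a b w (j:ℕ) * (TM a b w j i * Vv lam w k i) := by
        refine Finset.sum_congr rfl fun i _ => ?_
        linear_combination (Vv lam w k i) * TM_symm_rel a b w i j
    _ = S a b w (j:ℕ) * ((TM a b w *ᵥ Vv lam w k) j) := by
        rw [Matrix.mulVec, dotProduct, Finset.mul_sum]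
    _ = ev lam w k * Uv lam w k j := by
        rw [mulVec_eigen lam hlam w hw k, hUv j]
        show S a b w (j:ℕ) * (ev lam w k * Vv lam w k j) = _
        ring

lemma lam_add_inv_gt_two (lam : ℝ) (hlam : 0 < lam) (hlam1 : lam ≠ 1) :
    2 < lam + lam⁻¹ := by
  have h1 : lam * lam⁻¹ = 1 := mul_inv_cancel₀ (ne_of_gt hlam)
  have h2 : (lam - 1)^2 > 0 :=
    lt_of_le_of_ne (sq_nonneg _) (Ne.symm (pow_ne_zero 2 (sub_ne_zero.mpr hlam1)))
  nlinarith [mul_pos hlam (inv_pos.mpr hlam)]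

lemma cos_abs_lt (w k : ℕ) (hk1 : 1 ≤ k) (hkw : k < w) : |Real.cos (th w k)| < 1 := by
  have hw0 : 0 < w := lt_of_le_of_lt (Nat.zero_le _) hkw
  have hθpos : 0 < th w k := by
    unfold th
    have : (0:ℝ) < k := by exact_mod_cast hk1
    have : (0:ℝ) < w := by exact_mod_cast hw0
    positivity
  have hθlt : th w k < Real.pi := by
    unfold th
    rw [div_lt_iff₀ (by exact_mod_cast hw0)]
    have : (k:ℝ) < w := by exact_mod_cast hkw
    nlinarith [Real.pi_pos]
  have hsin : 0 < Real.sin (th w k) := Real.sin_pos_of_pos_of_lt_pi hθpos hθlt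
  have hpy := Real.sin_sq_add_cos_sq (th w k)
  rw [abs_lt]
  constructor <;> nlinarith

lemma th_mem (w k : ℕ) (hk : k ≤ w) (hw : 1 ≤ w) : th w k ∈ Set.Icc 0 Real.pi := by
  have hw0 : (0:ℝ) < w := by exact_mod_cast hw
  constructor
  · unfold th; positivity
  · unfold th
    rw [div_le_iff₀ hw0]
    have : (k:ℝ) ≤ w := by exact_mod_cast hk
    nlinarith [Real.pi_pos]

lemma ev_zero (lam : ℝ) (w : ℕ) : ev lam w 0 = lam + lam⁻¹ := if_pos rfl

lemma ev_w (lam : ℝ) (w : ℕ) (hw : 1 ≤ w) : ev lam w w = -(lam + lam⁻¹) := by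
  unfold ev; rw [if_neg (by omega), if_pos rfl]

lemma ev_mid (lam : ℝ) (w k : ℕ) (hk0 : k ≠ 0) (hkw : k ≠ w) :
    ev lam w k = 2 * Real.cos (th w k) := by
  unfold ev; rw [if_neg hk0, if_neg hkw]

lemma ev_inj (lam : ℝ) (hlam : 0 < lam) (hlam1 : lam ≠ 1) (w : ℕ) (hw : 1 ≤ w) :
    ∀ k l : ℕ, k ≤ w → l ≤ w → ev lam w k = ev lam w l → k = l := by
  have hL := lam_add_inv_gt_two lam hlam hlam1
  have hmid : ∀ m : ℕ, m ≠ 0 → m ≠ w → m ≤ w → |Real.cos (th w m)| < 1 := by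
    intro m h0 hww hmw
    exact cos_abs_lt w m (by omega) (by omega)
  intro k l hk hl hev
  by_cases hk0 : k = 0 <;> by_cases hkw : k = w <;>
    by_cases hl0 : l = 0 <;> by_cases hlw : l = w
  · omega
  · omega
  · omega
  · omega
  · omega
  · omega
  · exfalso; rw [hk0, hlw, ev_zero, ev_w lam w hw] at hev; linarith
  · exfalso
    rw [hk0, ev_zero, ev_mid lam w l hl0 hlw] at hev
    have := hmid l hl0 hlw hl
    rw [abs_lt] at this; linarith
  · omega
  · exfalso; rw [hkw, hl0, ev_w lam w hw, ev_zero] at hev; linarith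
  · omega
  · exfalso
    rw [hkw, ev_w lam w hw, ev_mid lam w l hl0 hlw] at hev
    have := hmid l hl0 hlw hl
    rw [abs_lt] at this; linarith
  · omega
  · exfalso
    rw [hl0, ev_mid lam w k hk0 hkw, ev_zero] at hev
    have := hmid k hk0 hkw hk
    rw [abs_lt] at this; linarith
  · exfalso
    rw [hlw, ev_mid lam w k hk0 hkw, ev_w lam w hw] at hev
    have := hmid k hk0 hkw hk
    rw [abs_lt] at this; linarith
  · rw [ev_mid lam w k hk0 hkw, ev_mid lam w l hl0 hlw] at hev
    have h1 := th_mem w k hk hw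
    have h2 := th_mem w l hl hw
    have h3 : th w k = th w l :=
      Real.strictAntiOn_cos.injOn h1 h2 (by linarith)
    unfold th at h3
    have hw0 : (0:ℝ) < w := by exact_mod_cast hw
    have hπ := Real.pi_pos
    have h4 : (k:ℝ) = l := by
      have h5 : (k:ℝ) * Real.pi = l * Real.pi := by
        rw [div_left_inj' (ne_of_gt hw0)] at h3
        exact h3
      exact mul_right_cancel₀ (ne_of_gt hπ) h5
    exact_mod_cast h4

lemma sin_th_pos (w k : ℕ) (hk1 : 1 ≤ k) (hkw : k < w) : 0 < Real.sin (th w k) := by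
  have hw0 : 0 < w := lt_of_le_of_lt (Nat.zero_le _) hkw
  have hθpos : 0 < th w k := by
    unfold th
    have h1 : (0:ℝ) < k := by exact_mod_cast hk1
    have h2 : (0:ℝ) < w := by exact_mod_cast hw0
    positivity
  have hθlt : th w k < Real.pi := by
    unfold th
    rw [div_lt_iff₀ (by exact_mod_cast hw0)]
    have : (k:ℝ) < w := by exact_mod_cast hkw
    nlinarith [Real.pi_pos]
  exact Real.sin_pos_of_pos_of_lt_pi hθpos hθlt

lemma uf_zero_pos (lam : ℝ) (hlam : 0 < lam) (w k : ℕ) (hk : k ≤ w) :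
    0 < uf lam w k 0 := by
  unfold uf
  split_ifs with h0 hw'
  · norm_num
  · norm_num
  · simp only [Nat.cast_zero, mul_zero, Real.sin_zero, Real.cos_zero, mul_one, add_zero,
      mul_zero, zero_add]
    have hs := sin_th_pos w k (by omega) (by omega)
    positivity

lemma Nk_pos (lam : ℝ) (hlam : 0 < lam) (w k : ℕ) (hk : k ≤ w) :
    0 < Uv lam w k ⬝ᵥ Vv lam w k := by
  have hlam0 : lam ≠ 0 := ne_of_gt hlam
  unfold dotProduct
  apply Finset.sum_pos'
  · intro i _
    show 0 ≤ uf lam w k (i:ℕ) * (uf lam w k (i:ℕ) / S (1+lam^2) (1+lam⁻¹^2) w (i:ℕ))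
    rw [show ∀ x y : ℝ, x * (x / y) = x^2 / y from fun x y => by ring]
    exact div_nonneg (sq_nonneg _) (le_of_lt (S_pos lam hlam0 w _))
  · refine ⟨0, Finset.mem_univ _, ?_⟩
    show 0 < uf lam w k ((0 : Fin (w+1)):ℕ) *
      (uf lam w k ((0 : Fin (w+1)):ℕ) / S (1+lam^2) (1+lam⁻¹^2) w ((0 : Fin (w+1)):ℕ))
    rw [Fin.val_zero]
    rw [show ∀ x y : ℝ, x * (x / y) = x^2 / y from fun x y => by ring]
    exact div_pos (pow_pos (uf_zero_pos lam hlam w k hk) 2) (S_pos lam hlam0 w 0)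

lemma dotProduct_finsum {n : Type*} [Fintype n] {ι : Type*} (s : Finset ι)
    (v : n → ℝ) (f : ι → n → ℝ) :
    v ⬝ᵥ (∑ k ∈ s, f k) = ∑ k ∈ s, v ⬝ᵥ f k := by
  unfold dotProduct
  rw [Finset.sum_comm]
  refine Finset.sum_congr rfl fun i _ => ?_
  rw [Finset.sum_apply, Finset.mul_sum]

lemma horth (lam : ℝ) (hlam : 0 < lam) (hlam1 : lam ≠ 1) (w : ℕ) (hw : 1 ≤ w)
    (k l : Fin (w+1)) (hne : k ≠ l) :
    Uv lam w (k:ℕ) ⬝ᵥ Vv lam w (l:ℕ) = 0 := by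
  have hlam0 : lam ≠ 0 := ne_of_gt hlam
  have h1 : Uv lam w (k:ℕ) ⬝ᵥ (TM (1+lam^2) (1+lam⁻¹^2) w *ᵥ Vv lam w (l:ℕ))
      = ev lam w (l:ℕ) * (Uv lam w (k:ℕ) ⬝ᵥ Vv lam w (l:ℕ)) := by
    rw [mulVec_eigen lam hlam0 w hw, dotProduct_smul, smul_eq_mul]
  have h2 : Uv lam w (k:ℕ) ⬝ᵥ (TM (1+lam^2) (1+lam⁻¹^2) w *ᵥ Vv lam w (l:ℕ))
      = ev lam w (k:ℕ) * (Uv lam w (k:ℕ) ⬝ᵥ Vv lam w (l:ℕ)) := by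
    rw [Matrix.dotProduct_mulVec, ← Matrix.mulVec_transpose,
      mulVec_transpose_eigen lam hlam0 w hw, smul_dotProduct, smul_eq_mul]
  have h3 : ev lam w (k:ℕ) ≠ ev lam w (l:ℕ) := by
    intro h
    exact hne (Fin.ext (ev_inj lam hlam hlam1 w hw _ _ (Nat.lt_succ_iff.mp k.isLt)
      (Nat.lt_succ_iff.mp l.isLt) h))
  have h4 : (ev lam w (k:ℕ) - ev lam w (l:ℕ)) * (Uv lam w (k:ℕ) ⬝ᵥ Vv lam w (l:ℕ)) = 0 := by
    rw [sub_mul, ← h1, ← h2, sub_self]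
  rcases mul_eq_zero.mp h4 with h5 | h5
  · exact absurd (by linarith : ev lam w (k:ℕ) = ev lam w (l:ℕ)) h3
  · exact h5

lemma decomp (lam : ℝ) (hlam : 0 < lam) (hlam1 : lam ≠ 1) (w : ℕ) (hw : 1 ≤ w) :
    (∑ k : Fin (w+1), (uf lam w (k:ℕ) 0 / (Uv lam w (k:ℕ) ⬝ᵥ Vv lam w (k:ℕ))) •
      Vv lam w (k:ℕ)) = Pi.single (0 : Fin (w+1)) (1:ℝ) := by
  have hlam0 : lam ≠ 0 := ne_of_gt hlam
  set D : Fin (w+1) → ℝ := (∑ k : Fin (w+1),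
    (uf lam w (k:ℕ) 0 / (Uv lam w (k:ℕ) ⬝ᵥ Vv lam w (k:ℕ))) • Vv lam w (k:ℕ))
    - Pi.single (0 : Fin (w+1)) (1:ℝ) with hDdef
  have hUD : ∀ l : Fin (w+1), Uv lam w (l:ℕ) ⬝ᵥ D = 0 := by
    intro l
    rw [hDdef, dotProduct_sub, dotProduct_finsum]
    have hterm : ∀ k : Fin (w+1), Uv lam w (l:ℕ) ⬝ᵥ
        ((uf lam w (k:ℕ) 0 / (Uv lam w (k:ℕ) ⬝ᵥ Vv lam w (k:ℕ))) • Vv lam w (k:ℕ))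
        = (uf lam w (k:ℕ) 0 / (Uv lam w (k:ℕ) ⬝ᵥ Vv lam w (k:ℕ))) *
          (Uv lam w (l:ℕ) ⬝ᵥ Vv lam w (k:ℕ)) := fun k => by
      rw [dotProduct_smul, smul_eq_mul]
    rw [Finset.sum_congr rfl fun k _ => hterm k]
    rw [Finset.sum_eq_single l ?h1 ?h2]
    · rw [div_mul_cancel₀ _ (ne_of_gt (Nk_pos lam hlam w (l:ℕ) (Nat.lt_succ_iff.mp l.isLt)))]
      rw [dotProduct_single, mul_one]
      show uf lam w (l:ℕ) 0 - Uv lam w (l:ℕ) 0 = 0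
      rw [sub_eq_zero]
      rfl
    · intro k _ hkl
      rw [horth lam hlam hlam1 w hw l k (Ne.symm hkl), mul_zero]
    · intro h
      exact absurd (Finset.mem_univ l) h
  have hind : LinearIndependent ℝ (fun k : Fin (w+1) => Uv lam w (k:ℕ)) := by
    apply Module.End.eigenvectors_linearIndependent'
      ((TM (1+lam^2) (1+lam⁻¹^2) w)ᵀ.mulVecLin)
      (fun k : Fin (w+1) => ev lam w (k:ℕ))
    · intro k l h
      exact Fin.ext (ev_inj lam hlam hlam1 w hw _ _ (Nat.lt_succ_iff.mp k.isLt)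
        (Nat.lt_succ_iff.mp l.isLt) h)
    · intro k
      constructor
      · rw [Module.End.mem_eigenspace_iff, Matrix.mulVecLin_apply,
          mulVec_transpose_eigen lam hlam0 w hw]
      · intro h
        have h0 := congrFun h 0
        have := uf_zero_pos lam hlam w (k:ℕ) (Nat.lt_succ_iff.mp k.isLt)
        rw [show Uv lam w (k:ℕ) 0 = uf lam w (k:ℕ) 0 from rfl] at h0
        rw [h0] at this
        exact lt_irrefl 0 this
  have hspan : Submodule.span ℝ (Set.range (fun k : Fin (w+1) => Uv lam w (k:ℕ))) = ⊤ :=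
    hind.span_eq_top_of_card_eq_finrank (by simp)
  have hDD : D ⬝ᵥ D = 0 := by
    have hD : D ∈ Submodule.span ℝ (Set.range (fun k : Fin (w+1) => Uv lam w (k:ℕ))) := by
      rw [hspan]; trivial
    obtain ⟨c', hc'⟩ := (Submodule.mem_span_range_iff_exists_fun ℝ).1 hD
    calc D ⬝ᵥ D = D ⬝ᵥ (∑ k : Fin (w+1), c' k • Uv lam w (k:ℕ)) := by rw [hc']
      _ = ∑ k : Fin (w+1), c' k * (D ⬝ᵥ Uv lam w (k:ℕ)) := by
          rw [dotProduct_finsum]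
          exact Finset.sum_congr rfl fun k _ => by
            rw [dotProduct_smul, smul_eq_mul]
      _ = 0 := by
          refine Finset.sum_eq_zero fun k _ => ?_
          rw [dotProduct_comm, hUD k, mul_zero]
  have hD0 : D = 0 := dotProduct_self_eq_zero.mp hDD
  rw [hDdef] at hD0
  exact sub_eq_zero.mp hD0

lemma pow_mulVec_eigen (lam : ℝ) (hlam0 : lam ≠ 0) (w : ℕ) (hw : 1 ≤ w) (n : ℕ)
    (k : Fin (w+1)) : (TM (1+lam^2) (1+lam⁻¹^2) w ^ n) *ᵥ Vv lam w (k:ℕ)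
      = ev lam w (k:ℕ)^n • Vv lam w (k:ℕ) := by
  induction n with
  | zero => rw [pow_zero, pow_zero, Matrix.one_mulVec, one_smul]
  | succ m ih =>
      rw [pow_succ', ← Matrix.mulVec_mulVec, ih, Matrix.mulVec_smul,
        mulVec_eigen lam hlam0 w hw, smul_smul, ← pow_succ]

lemma pow_spectral (lam : ℝ) (hlam : 0 < lam) (hlam1 : lam ≠ 1) (w n : ℕ) (hw : 1 ≤ w) :
    (TM (1+lam^2) (1+lam⁻¹^2) w ^ n) 0 0
      = ∑ k : Fin (w+1), (uf lam w (k:ℕ) 0 / (Uv lam w (k:ℕ) ⬝ᵥ Vv lam w (k:ℕ))) *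
        ev lam w (k:ℕ) ^ n * Vv lam w (k:ℕ) 0 := by
  have hlam0 : lam ≠ 0 := ne_of_gt hlam
  have h1 : (TM (1+lam^2) (1+lam⁻¹^2) w ^ n) 0 0
      = ((TM (1+lam^2) (1+lam⁻¹^2) w ^ n) *ᵥ Pi.single (0 : Fin (w+1)) (1:ℝ)) 0 := by
    rw [Matrix.mulVec_single]
    simp
  rw [h1, ← decomp lam hlam hlam1 w hw]
  have hp : ∀ k : Fin (w+1), (TM (1+lam^2) (1+lam⁻¹^2) w ^ n) *ᵥ Vv lam w (k:ℕ)
      = ev lam w (k:ℕ)^n • Vv lam w (k:ℕ) := pow_mulVec_eigen lam hlam0 w hw n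
  have h2 : (TM (1+lam^2) (1+lam⁻¹^2) w ^ n) *ᵥ (∑ k : Fin (w+1),
      (uf lam w (k:ℕ) 0 / (Uv lam w (k:ℕ) ⬝ᵥ Vv lam w (k:ℕ))) • Vv lam w (k:ℕ))
      = ∑ k : Fin (w+1), (uf lam w (k:ℕ) 0 / (Uv lam w (k:ℕ) ⬝ᵥ Vv lam w (k:ℕ))) •
        (ev lam w (k:ℕ)^n • Vv lam w (k:ℕ)) := by
    rw [← Matrix.mulVecLin_apply, map_sum]
    refine Finset.sum_congr rfl fun k _ => ?_
    rw [LinearMap.map_smul, Matrix.mulVecLin_apply, hp k]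
  rw [h2, Finset.sum_apply]
  refine Finset.sum_congr rfl fun k _ => ?_
  show _ * (_ * Vv lam w (k:ℕ) 0) = _
  ring

lemma th_pos (w k : ℕ) (hk1 : 1 ≤ k) (hkw : k < w) : 0 < th w k := by
  have hw0 : 0 < w := lt_of_le_of_lt (Nat.zero_le _) hkw
  unfold th
  have h1 : (0:ℝ) < k := by exact_mod_cast hk1
  have h2 : (0:ℝ) < w := by exact_mod_cast hw0
  positivity

lemma th_lt_pi (w k : ℕ) (hk1 : 1 ≤ k) (hkw : k < w) : th w k < Real.pi := by
  have hw0 : 0 < w := lt_of_le_of_lt (Nat.zero_le _) hkw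
  unfold th
  rw [div_lt_iff₀ (by exact_mod_cast hw0)]
  have : (k:ℝ) < w := by exact_mod_cast hkw
  nlinarith [Real.pi_pos]

lemma exp_sum_zero (w k : ℕ) (hk1 : 1 ≤ k) (hkw : k < w) :
    ∑ j ∈ Finset.range w, Complex.exp ((2 * th w k * j : ℝ) * Complex.I) = 0 := by
  have hw0 : 0 < w := lt_of_le_of_lt (Nat.zero_le _) hkw
  set z := Complex.exp ((2 * th w k : ℝ) * Complex.I) with hzdef
  have hz : ∀ j : ℕ, Complex.exp ((2 * th w k * j : ℝ) * Complex.I) = z ^ j := by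
    intro j
    rw [hzdef, ← Complex.exp_nat_mul]
    congr 1
    push_cast
    ring
  rw [Finset.sum_congr rfl fun j _ => hz j]
  have hθw : (2 * th w k) * w = (k:ℝ) * (2 * Real.pi) := by
    unfold th
    have : (w:ℝ) ≠ 0 := by positivity
    field_simp
  have hzw : z ^ w = 1 := by
    rw [hzdef, ← Complex.exp_nat_mul]
    have harg : (w:ℂ) * ((2 * th w k : ℝ) * Complex.I) = (k:ℤ) * (2 * Real.pi * Complex.I) := by
      rw [show (w:ℂ) * ((2 * th w k : ℝ) * Complex.I)
        = ((2 * th w k * w : ℝ) : ℂ) * Complex.I from by push_cast; ring]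
      rw [hθw]
      push_cast
      ring
    rw [harg, Complex.exp_int_mul_two_pi_mul_I]
  have hz1 : z ≠ 1 := by
    rw [hzdef, Ne, Complex.exp_eq_one_iff]
    push_neg
    intro m hm
    have hm2 : ((2 * th w k : ℝ) : ℂ) = (((m:ℝ) * (2 * Real.pi) : ℝ) : ℂ) := by
      have hI := hm
      rw [show ((m:ℂ) * (2 * (Real.pi:ℂ) * Complex.I))
        = (((m:ℝ) * (2 * Real.pi) : ℝ) : ℂ) * Complex.I from by push_cast; ring] at hI
      exact mul_right_cancel₀ Complex.I_ne_zero hI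
    have hre : 2 * th w k = (m:ℝ) * (2 * Real.pi) := by exact_mod_cast hm2
    have hp := th_pos w k hk1 hkw
    have hl := th_lt_pi w k hk1 hkw
    have hπ := Real.pi_pos
    have hm' : (m:ℝ) * Real.pi = th w k := by linarith
    have h0 : (0:ℝ) < m * Real.pi := by rw [hm']; exact hp
    have h1 : (m:ℝ) * Real.pi < Real.pi := by rw [hm']; exact hl
    have hm0 : 0 < (m:ℝ) := by
      by_contra hc
      push_neg at hc
      nlinarith
    have hm1 : (m:ℝ) < 1 := by
      by_contra hc
      push_neg at hc
      nlinarith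
    have : (0:ℤ) < m := by exact_mod_cast hm0
    have : (m:ℤ) < 1 := by exact_mod_cast hm1
    omega
  have := geom_sum_eq hz1 w
  rw [this, hzw, sub_self, zero_div]

lemma sum_cos_2th (w k : ℕ) (hk1 : 1 ≤ k) (hkw : k < w) :
    ∑ j ∈ Finset.range (w+1), Real.cos (2 * th w k * j) = 1 := by
  have h1 : ∑ j ∈ Finset.range w, Real.cos (2 * th w k * j) = 0 := by
    have h0 := congrArg Complex.re (exp_sum_zero w k hk1 hkw)
    rw [Complex.re_sum] at h0
    have h2 : ∑ j ∈ Finset.range w, Real.cos (2 * th w k * j)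
        = ∑ j ∈ Finset.range w, (Complex.exp ((2 * th w k * j : ℝ) * Complex.I)).re :=
      Finset.sum_congr rfl fun j _ => (Complex.exp_ofReal_mul_I_re _).symm
    rw [h2]
    simpa using h0
  rw [Finset.sum_range_succ, h1, zero_add]
  have hθw : 2 * th w k * w = (k:ℝ) * (2 * Real.pi) := by
    unfold th
    have hw0 : (w:ℝ) ≠ 0 := by
      have : (0:ℝ) < w := by exact_mod_cast lt_of_le_of_lt (Nat.zero_le _) hkw
      exact ne_of_gt this
    field_simp
  rw [hθw, Real.cos_nat_mul_two_pi]

lemma sum_sin_2th (w k : ℕ) (hk1 : 1 ≤ k) (hkw : k < w) :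
    ∑ j ∈ Finset.range (w+1), Real.sin (2 * th w k * j) = 0 := by
  have h1 : ∑ j ∈ Finset.range w, Real.sin (2 * th w k * j) = 0 := by
    have h0 := congrArg Complex.im (exp_sum_zero w k hk1 hkw)
    rw [Complex.im_sum] at h0
    have h2 : ∑ j ∈ Finset.range w, Real.sin (2 * th w k * j)
        = ∑ j ∈ Finset.range w, (Complex.exp ((2 * th w k * j : ℝ) * Complex.I)).im :=
      Finset.sum_congr rfl fun j _ => (Complex.exp_ofReal_mul_I_im _).symm
    rw [h2]
    simpa using h0
  rw [Finset.sum_range_succ, h1, zero_add]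
  have hθw : 2 * th w k * w = (k:ℝ) * (2 * Real.pi) := by
    unfold th
    have hw0 : (w:ℝ) ≠ 0 := by
      have : (0:ℝ) < w := by exact_mod_cast lt_of_le_of_lt (Nat.zero_le _) hkw
      exact ne_of_gt this
    field_simp
  rw [hθw]
  have : (k:ℝ) * (2 * Real.pi) = (2 * k : ℕ) * Real.pi := by push_cast; ring
  rw [this, Real.sin_nat_mul_pi]

lemma Nk_split (lam : ℝ) (hlam : 0 < lam) (w k : ℕ) (hw : 1 ≤ w) :
    Uv lam w k ⬝ᵥ Vv lam w k
      = (∑ j ∈ Finset.range (w+1), uf lam w k j ^ 2)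
        + (1/(1+lam^2) - 1) * uf lam w k 0 ^ 2
        + (1/(1+lam⁻¹^2) - 1) * uf lam w k w ^ 2 := by
  have hterm : ∀ j : Fin (w+1), Uv lam w k j * Vv lam w k j
      = uf lam w k (j:ℕ) ^ 2
        + (if (j:ℕ) = 0 then (1/(1+lam^2) - 1) * uf lam w k 0 ^ 2 else 0)
        + (if (j:ℕ) = w then (1/(1+lam⁻¹^2) - 1) * uf lam w k w ^ 2 else 0) := by
    intro j
    show uf lam w k (j:ℕ) * (uf lam w k (j:ℕ) / S (1+lam^2) (1+lam⁻¹^2) w (j:ℕ)) = _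
    unfold S
    by_cases hj0 : (j:ℕ) = 0
    · rw [if_pos hj0, if_pos hj0, if_neg (by omega), hj0]
      have ha : (1+lam^2) ≠ 0 := by positivity
      field_simp
      ring
    · rw [if_neg hj0, if_neg hj0]
      by_cases hjw : (j:ℕ) = w
      · rw [if_pos hjw, if_pos hjw, hjw]
        have hb : (1+lam⁻¹^2) ≠ 0 := by positivity
        field_simp
        ring
      · rw [if_neg hjw, if_neg hjw]
        ring
  show (∑ j : Fin (w+1), Uv lam w k j * Vv lam w k j) = _
  rw [Finset.sum_congr rfl fun j _ => hterm j]
  rw [Finset.sum_add_distrib, Finset.sum_add_distrib]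
  have e1 : (∑ j : Fin (w+1), uf lam w k (j:ℕ) ^ 2)
      = ∑ j ∈ Finset.range (w+1), uf lam w k j ^ 2 :=
    Fin.sum_univ_eq_sum_range (fun j => uf lam w k j ^ 2) (w+1)
  have e2 : (∑ j : Fin (w+1), (if ((j:Fin (w+1)):ℕ) = 0
        then (1/(1+lam^2) - 1) * uf lam w k 0 ^ 2 else 0))
      = (1/(1+lam^2) - 1) * uf lam w k 0 ^ 2 := by
    rw [Fin.sum_univ_eq_sum_range (fun j => if j = 0
      then (1/(1+lam^2) - 1) * uf lam w k 0 ^ 2 else 0) (w+1)]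
    rw [Finset.sum_ite_eq' (Finset.range (w+1)) 0
      (fun _ => (1/(1+lam^2) - 1) * uf lam w k 0 ^ 2)]
    rw [if_pos (Finset.mem_range.mpr (by omega))]
  have e3 : (∑ j : Fin (w+1), (if ((j:Fin (w+1)):ℕ) = w
        then (1/(1+lam⁻¹^2) - 1) * uf lam w k w ^ 2 else 0))
      = (1/(1+lam⁻¹^2) - 1) * uf lam w k w ^ 2 := by
    rw [Fin.sum_univ_eq_sum_range (fun j => if j = w
      then (1/(1+lam⁻¹^2) - 1) * uf lam w k w ^ 2 else 0) (w+1)]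
    rw [Finset.sum_ite_eq' (Finset.range (w+1)) w
      (fun _ => (1/(1+lam⁻¹^2) - 1) * uf lam w k w ^ 2)]
    rw [if_pos (Finset.mem_range.mpr (by omega))]
  rw [e1, e2, e3]

lemma Vv_zero (lam : ℝ) (w k : ℕ) (hw : 1 ≤ w) :
    Vv lam w k (0 : Fin (w+1)) = uf lam w k 0 / (1+lam^2) := by
  show uf lam w k ((0 : Fin (w+1)):ℕ) / S (1+lam^2) (1+lam⁻¹^2) w ((0 : Fin (w+1)):ℕ) = _
  rw [Fin.val_zero]
  unfold S
  rw [if_pos rfl]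

lemma uf_zero_zero (lam : ℝ) (w : ℕ) : uf lam w 0 0 = 1 := by
  unfold uf; rw [if_pos rfl, pow_zero]

lemma uf_w_zero (lam : ℝ) (w : ℕ) (hw : 1 ≤ w) : uf lam w w 0 = 1 := by
  unfold uf; rw [if_neg (by omega), if_pos rfl, pow_zero]

lemma uf_mid_zero (lam : ℝ) (w k : ℕ) (hk1 : 1 ≤ k) (hkw : k < w) :
    uf lam w k 0 = Real.sin (th w k) * (1+lam^2) := by
  unfold uf
  rw [if_neg (by omega), if_neg (by omega)]
  push_cast
  simp [Real.sin_zero, Real.cos_zero]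

lemma uf_mid_w_sq (lam : ℝ) (w k : ℕ) (hk1 : 1 ≤ k) (hkw : k < w) :
    uf lam w k w ^ 2 = (Real.sin (th w k) * (1+lam^2)) ^ 2 := by
  unfold uf
  rw [if_neg (by omega), if_neg (by omega)]
  have hw0 : (w:ℝ) ≠ 0 := by
    have : (0:ℝ) < w := by exact_mod_cast lt_of_le_of_lt (Nat.zero_le _) hkw
    exact ne_of_gt this
  have hθw : th w k * (w:ℝ) = (k:ℝ) * Real.pi := by
    unfold th; field_simp
  rw [hθw, Real.sin_nat_mul_pi]
  have h1 : Real.cos ((k:ℝ) * Real.pi) = (-1) ^ k := by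
    have := Real.cos_nat_mul_pi_sub 0 k
    simpa using this
  rw [h1]
  rw [show Real.cos (th w k) * (1 - lam ^ 2) * 0
    + Real.sin (th w k) * (1 + lam ^ 2) * (-1:ℝ)^k
    = (Real.sin (th w k) * (1 + lam ^ 2)) * (-1:ℝ)^k from by ring]
  rw [mul_pow, ← pow_mul, mul_comm k 2, pow_mul, neg_one_sq, one_pow, mul_one]

lemma Nmid_val (lam : ℝ) (hlam : 0 < lam) (w k : ℕ) (hk1 : 1 ≤ k) (hkw : k < w) :
    Uv lam w k ⬝ᵥ Vv lam w k
      = (w:ℝ)/2 * ((1-lam^2)^2 + 4*lam^2*Real.sin (th w k)^2) := by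
  have hlam0 : lam ≠ 0 := ne_of_gt hlam
  set c := Real.cos (th w k) with hc
  set sn := Real.sin (th w k) with hsn
  set P := c*(1-lam^2) with hP
  set Q := sn*(1+lam^2) with hQ
  have hpoint : ∀ j : ℕ, uf lam w k j ^ 2
      = (P^2+Q^2)/2 + ((Q^2-P^2)/2) * Real.cos (2*th w k*j) + P*Q*Real.sin (2*th w k*j) := by
    intro j
    unfold uf
    rw [if_neg (by omega), if_neg (by omega)]
    rw [show 2*th w k*(j:ℝ) = 2*(th w k*(j:ℝ)) from by ring,
      Real.cos_two_mul, Real.sin_two_mul]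
    rw [hP, hQ, hc, hsn]
    linear_combination ((Real.cos (th w k))^2 * (1-lam^2)^2) *
      Real.sin_sq_add_cos_sq (th w k * (j:ℝ))
  have hsum : (∑ j ∈ Finset.range (w+1), uf lam w k j ^ 2)
      = ((w:ℝ)+1)*((P^2+Q^2)/2) + (Q^2-P^2)/2 := by
    rw [Finset.sum_congr rfl fun j _ => hpoint j]
    rw [Finset.sum_add_distrib, Finset.sum_add_distrib]
    rw [Finset.sum_const, ← Finset.mul_sum, ← Finset.mul_sum]
    rw [sum_cos_2th w k hk1 hkw, sum_sin_2th w k hk1 hkw]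
    rw [Finset.card_range]
    push_cast
    ring
  rw [Nk_split lam hlam w k (by omega)]
  rw [hsum, uf_mid_zero lam w k hk1 hkw, uf_mid_w_sq lam w k hk1 hkw]
  have hkey2 : P^2 + Q^2 = (1-lam^2)^2 + 4*lam^2*sn^2 := by
    rw [hP, hQ, hc, hsn]
    linear_combination ((1-lam^2)^2) * Real.sin_sq_add_cos_sq (th w k)
  have ha : (1:ℝ)+lam^2 ≠ 0 := by positivity
  have hb : (1:ℝ)+lam⁻¹^2 ≠ 0 := by positivity
  rw [← hkey2]
  rw [show (Real.sin (th w k) * (1+lam^2))^2 = Q^2 from by rw [hQ, hsn]]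
  rw [hP, hQ, hc, hsn]
  field_simp
  ring

lemma coeff_mid (lam : ℝ) (hlam : 0 < lam) (hlam1 : lam ≠ 1) (w k n : ℕ)
    (hk1 : 1 ≤ k) (hkw : k < w) :
    (uf lam w k 0 / (Uv lam w k ⬝ᵥ Vv lam w k)) * ev lam w k ^ n * Vv lam w k (0 : Fin (w+1))
      = 2^n/(lam*(w:ℝ)) * ((lam+lam⁻¹)/2 * Real.sin (th w k)^2 /
          (((lam-lam⁻¹)/2)^2 + Real.sin (th w k)^2)) * Real.cos (th w k)^n := by
  have hlam0 : lam ≠ 0 := ne_of_gt hlam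
  have hw1 : 1 ≤ w := by omega
  rw [Nmid_val lam hlam w k hk1 hkw, ev_mid lam w k (by omega) (by omega),
    Vv_zero lam w k hw1, uf_mid_zero lam w k hk1 hkw, mul_pow]
  set sn := Real.sin (th w k) with hsn
  have hsn0 : 0 < sn := sin_th_pos w k hk1 hkw
  have hw0 : (0:ℝ) < w := by exact_mod_cast lt_of_le_of_lt (Nat.zero_le _) hkw
  have ha : (1:ℝ)+lam^2 ≠ 0 := by positivity
  have hD : ((lam-lam⁻¹)/2)^2 + sn^2 ≠ 0 := by positivity
  have hE : (1-lam^2)^2 + 4*lam^2*sn^2 ≠ 0 := by positivity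
  have base : (sn*(1+lam^2)) / ((w:ℝ)/2 * ((1-lam^2)^2 + 4*lam^2*sn^2))
        * ((sn*(1+lam^2)) / (1+lam^2))
      = 1/(lam*(w:ℝ)) * ((lam+lam⁻¹)/2 * sn^2 / (((lam-lam⁻¹)/2)^2 + sn^2)) := by
    field_simp
    ring
  calc (sn*(1+lam^2)) / ((w:ℝ)/2 * ((1-lam^2)^2 + 4*lam^2*sn^2))
        * (2^n * Real.cos (th w k)^n) * ((sn*(1+lam^2)) / (1+lam^2))
      = ((sn*(1+lam^2)) / ((w:ℝ)/2 * ((1-lam^2)^2 + 4*lam^2*sn^2))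
          * ((sn*(1+lam^2)) / (1+lam^2))) * (2^n * Real.cos (th w k)^n) := by ring
    _ = (1/(lam*(w:ℝ)) * ((lam+lam⁻¹)/2 * sn^2 / (((lam-lam⁻¹)/2)^2 + sn^2)))
          * (2^n * Real.cos (th w k)^n) := by rw [base]
    _ = 2^n/(lam*(w:ℝ)) * ((lam+lam⁻¹)/2 * sn^2 /
          (((lam-lam⁻¹)/2)^2 + sn^2)) * Real.cos (th w k)^n := by ring

lemma sq_ne_one (lam : ℝ) (hlam : 0 < lam) (hlam1 : lam ≠ 1) : lam^2 ≠ 1 := by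
  intro h
  have h2 : (lam-1)*(lam+1) = 0 := by linear_combination h
  rcases mul_eq_zero.mp h2 with h3 | h3
  · exact hlam1 (by linarith)
  · linarith

lemma pow2w_ne_one (lam : ℝ) (hlam : 0 < lam) (hlam1 : lam ≠ 1) (w : ℕ) (hw : 1 ≤ w) :
    lam^(2*w) ≠ 1 := by
  have h2 := sq_ne_one lam hlam hlam1
  rw [pow_mul]
  intro h
  rcases lt_or_gt_of_ne h2 with hlt | hgt
  · have hlt1 : (lam^2)^w < 1 := pow_lt_one₀ (by positivity) hlt (by omega)
    rw [h] at hlt1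
    exact lt_irrefl 1 hlt1
  · have hgt1 : 1 < (lam^2)^w := one_lt_pow₀ hgt (by omega)
    rw [h] at hgt1
    exact lt_irrefl 1 hgt1

lemma N0_geom (lam : ℝ) (hlam : 0 < lam) (hlam1 : lam ≠ 1) (w : ℕ) (hw : 1 ≤ w) :
    Uv lam w 0 ⬝ᵥ Vv lam w 0
      = (((lam^2)⁻¹ * (lam^(2*w))⁻¹ - 1)/((lam^2)⁻¹ - 1))
        + (1/(1+lam^2) - 1) + (1/(1+lam⁻¹^2) - 1) * (lam^(2*w))⁻¹ := by
  have hlam0 : lam ≠ 0 := ne_of_gt hlam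
  have huf : ∀ j : ℕ, uf lam w 0 j = lam⁻¹^j := fun j => by unfold uf; rw [if_pos rfl]
  have hsq : ∀ j : ℕ, uf lam w 0 j ^ 2 = ((lam^2)⁻¹)^j := by
    intro j
    rw [huf j, ← pow_right_comm, inv_pow]
  have hinv1 : (lam^2)⁻¹ ≠ 1 := by
    intro h
    exact sq_ne_one lam hlam hlam1 (inv_eq_one.mp h)
  rw [Nk_split lam hlam w 0 hw]
  rw [Finset.sum_congr rfl fun j _ => hsq j, geom_sum_eq hinv1 (w+1)]
  rw [uf_zero_zero, hsq w]
  have e1 : ((lam^2)⁻¹)^(w+1) = (lam^2)⁻¹ * (lam^(2*w))⁻¹ := by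
    rw [pow_succ, pow_mul, mul_comm, inv_pow]
  have e2 : ((lam^2)⁻¹)^w = (lam^(2*w))⁻¹ := by
    rw [pow_mul, inv_pow]
  rw [e1, e2, one_pow]
  ring

lemma Nw_eq_N0 (lam : ℝ) (hlam : 0 < lam) (w : ℕ) (hw : 1 ≤ w) :
    Uv lam w w ⬝ᵥ Vv lam w w = Uv lam w 0 ⬝ᵥ Vv lam w 0 := by
  have hsq : ∀ j : ℕ, uf lam w w j ^ 2 = uf lam w 0 j ^ 2 := by
    intro j
    unfold uf
    rw [if_neg (by omega), if_pos rfl, if_pos rfl]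
    rw [← pow_right_comm, neg_sq, pow_right_comm]
  show (∑ j : Fin (w+1), Uv lam w w j * Vv lam w w j)
    = ∑ j : Fin (w+1), Uv lam w 0 j * Vv lam w 0 j
  refine Finset.sum_congr rfl fun j _ => ?_
  show uf lam w w (j:ℕ) * (uf lam w w (j:ℕ) / S (1+lam^2) (1+lam⁻¹^2) w (j:ℕ))
    = uf lam w 0 (j:ℕ) * (uf lam w 0 (j:ℕ) / S (1+lam^2) (1+lam⁻¹^2) w (j:ℕ))
  rw [show ∀ x y : ℝ, x * (x / y) = x^2 / y from fun x y => by ring,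
    show ∀ x y : ℝ, x * (x / y) = x^2 / y from fun x y => by ring, hsq]

lemma edge_alg (y z : ℝ) (hy0 : y ≠ 0) (hy1 : y ≠ 1) (hym : 1 + y ≠ 0) (hz0 : z ≠ 0) :
    ((y⁻¹ * z⁻¹ - 1)/(y⁻¹ - 1)) + (1/(1+y) - 1) + (1/(1+y⁻¹) - 1) * z⁻¹
      = 2*y*(z - 1)/((y^2-1) * z) := by
  have h1y : (1:ℝ) - y ≠ 0 := sub_ne_zero.mpr (Ne.symm hy1)
  have hy2 : y^2 - 1 ≠ 0 := by
    intro h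
    have h5 : (y-1)*(y+1) = 0 := by linear_combination h
    rcases mul_eq_zero.mp h5 with h6 | h6
    · exact hy1 (by linarith)
    · apply hym; linarith
  have hyi : y⁻¹ - 1 ≠ 0 := by
    intro h
    apply hy1
    have : y⁻¹ = 1 := by linarith
    exact inv_eq_one.mp this
  have hymi : 1 + y⁻¹ ≠ 0 := by
    intro h
    apply hym
    have h7 : y * (1 + y⁻¹) = y * 0 := by rw [h]
    rw [mul_add, mul_inv_cancel₀ hy0, mul_zero] at h7
    linarith [h7]
  have e0 : (y⁻¹*z⁻¹ - 1)/(y⁻¹ - 1) = (1 - y*z)/(z*(1-y)) := by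
    rw [div_eq_div_iff hyi (mul_ne_zero hz0 h1y)]
    field_simp
  have e1 : 1/(1+y) - 1 = -y/(1+y) := by
    rw [div_sub' hym]
    ring_nf
  have hyp1 : y + 1 ≠ 0 := by intro h; apply hym; linarith
  have e2 : (1/(1+y⁻¹) - 1) = -1/(y+1) := by
    rw [div_sub' hymi, div_eq_div_iff hymi hyp1]
    field_simp
    ring
  rw [e0, e1, e2]
  field_simp
  ring

lemma coeff_edge (lam : ℝ) (hlam : 0 < lam) (hlam1 : lam ≠ 1) (w n : ℕ) (hw : 1 ≤ w) :
    (uf lam w 0 0 / (Uv lam w 0 ⬝ᵥ Vv lam w 0)) * ev lam w 0 ^ n * Vv lam w 0 (0 : Fin (w+1))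
      + (uf lam w w 0 / (Uv lam w w ⬝ᵥ Vv lam w w)) * ev lam w w ^ n * Vv lam w w (0 : Fin (w+1))
    = (1 - lam^2)/(2*lam^2) * (lam^(2*w)/(1 - lam^(2*w))) * (lam+lam⁻¹)^n
      * (1 + (-1:ℝ)^n) := by
  have hlam0 : lam ≠ 0 := ne_of_gt hlam
  set z := lam^(2*w) with hzdef
  have hz0 : z ≠ 0 := pow_ne_zero _ hlam0
  have hz1 : z ≠ 1 := pow2w_ne_one lam hlam hlam1 w hw
  have hy1 : lam^2 ≠ 1 := sq_ne_one lam hlam hlam1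
  have h4 : lam^4 - 1 ≠ 0 := by
    intro h
    have h5 : (lam^2 - 1)*(lam^2+1) = 0 := by linear_combination h
    rcases mul_eq_zero.mp h5 with h6 | h6
    · exact hy1 (by linarith)
    · nlinarith [sq_nonneg lam]
  rw [Nw_eq_N0 lam hlam w hw, ev_zero, ev_w lam w hw, Vv_zero lam w 0 hw,
    Vv_zero lam w w hw, uf_zero_zero, uf_w_zero lam w hw,
    N0_geom lam hlam hlam1 w hw]
  have hNval := edge_alg (lam^2) z (pow_ne_zero _ hlam0) hy1 (by positivity) hz0
  rw [show (((lam^2)^2 : ℝ) - 1) = lam^4 - 1 from by ring] at hNval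
  rw [show (1:ℝ)/(1+(lam^2)⁻¹) = 1/(1+lam⁻¹^2) from by rw [inv_pow]] at hNval
  rw [hNval]
  have hkey : 1 / (2*lam^2*(z - 1)/((lam^4-1) * z)) * (1/(1+lam^2))
      = (1 - lam^2)/(2*lam^2) * (z/(1 - z)) := by
    have ha : (1:ℝ)+lam^2 ≠ 0 := by positivity
    have hzm1 : z - 1 ≠ 0 := sub_ne_zero.mpr hz1
    have h1z : 1 - z ≠ 0 := sub_ne_zero.mpr (Ne.symm hz1)
    rw [one_div_div]
    field_simp
    ring
  rw [neg_pow]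
  linear_combination ((lam+lam⁻¹)^n * (1 + (-1:ℝ)^n)) * hkey


theorem Z_eq_pow (a b : ℝ) (w n : ℕ) (hw : 1 ≤ w) :
    Z n w a b = (TM a b w ^ n) 0 0 := by
  rw [pow_apply_eq_sum_paths, Z]
  refine Finset.sum_congr rfl fun h _ => ?_
  by_cases hL : IsLoop h
  · obtain ⟨h0, hl, hstep⟩ := hL
    rw [if_pos ⟨h0, hl, hstep⟩, if_pos ⟨h0, hl⟩]
    have hadj : ∀ t : Fin n, TM a b w (h t.castSucc) (h t.succ) = S a b w (h t.succ : ℕ) := by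
      intro t
      have h1 := hstep t
      rw [abs_eq (by norm_num : (0:ℤ) ≤ 1)] at h1
      show (if _ then _ else _) = _
      rw [if_pos]
      omega
    rw [Finset.prod_congr rfl (fun t _ => hadj t)]
    -- reindex product over t : Fin n to i ≠ 0 in Fin (n+1)
    have hre : (∏ t : Fin n, S a b w ((h t.succ : Fin (w+1)) : ℕ))
        = ∏ i ∈ Finset.univ.filter (fun i : Fin (n+1) => i ≠ 0), S a b w ((h i : Fin (w+1)) : ℕ) := by
      rw [Finset.prod_filter, Fin.prod_univ_succ]
      simp [Fin.succ_ne_zero]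
    rw [hre]
    rw [← Finset.prod_filter_mul_prod_filter_not
      (Finset.univ.filter (fun i : Fin (n+1) => i ≠ 0)) (fun i => ((h i : Fin (w+1)) : ℕ) = 0)]
    rw [← Finset.prod_filter_mul_prod_filter_not
      ((Finset.univ.filter (fun i : Fin (n+1) => i ≠ 0)).filter
        (fun i => ¬((h i : Fin (w+1)) : ℕ) = 0)) (fun i => ((h i : Fin (w+1)) : ℕ) = w)]
    have e1 : (∏ i ∈ (Finset.univ.filter (fun i : Fin (n+1) => i ≠ 0)).filter
        (fun i => ((h i : Fin (w+1)) : ℕ) = 0), S a b w ((h i : Fin (w+1)) : ℕ))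
        = a ^ (Finset.univ.filter fun i : Fin (n + 1) => i ≠ 0 ∧ ((h i : Fin (w+1)) : ℕ) = 0).card := by
      rw [Finset.filter_filter]
      rw [Finset.prod_congr rfl (fun i hi => ?_), Finset.prod_const]
      simp only [Finset.mem_filter] at hi
      rw [S, if_pos hi.2.2]
    have e2 : (∏ i ∈ (((Finset.univ.filter (fun i : Fin (n+1) => i ≠ 0)).filter
          (fun i => ¬((h i : Fin (w+1)) : ℕ) = 0)).filter
          (fun i => ((h i : Fin (w+1)) : ℕ) = w)), S a b w ((h i : Fin (w+1)) : ℕ))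
        = b ^ (Finset.univ.filter fun i : Fin (n + 1) => ((h i : Fin (w+1)) : ℕ) = w).card := by
      have hset : (((Finset.univ.filter (fun i : Fin (n+1) => i ≠ 0)).filter
          (fun i => ¬((h i : Fin (w+1)) : ℕ) = 0)).filter
          (fun i => ((h i : Fin (w+1)) : ℕ) = w))
          = Finset.univ.filter fun i : Fin (n + 1) => ((h i : Fin (w+1)) : ℕ) = w := by
        ext i
        simp only [Finset.filter_filter, Finset.mem_filter, Finset.mem_univ, true_and]
        constructor
        · rintro ⟨_, hw'⟩; exact hw'
        · intro hiw
          refine ⟨⟨?_, by omega⟩, hiw⟩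
          rintro rfl
          rw [h0] at hiw
          simp at hiw
          omega
      rw [hset]
      rw [Finset.prod_congr rfl (fun i hi => ?_), Finset.prod_const]
      simp only [Finset.mem_filter] at hi
      rw [S, if_neg (by omega), if_pos hi.2]
    have e3 : (∏ i ∈ (((Finset.univ.filter (fun i : Fin (n+1) => i ≠ 0)).filter
          (fun i => ¬((h i : Fin (w+1)) : ℕ) = 0)).filter
          (fun i => ¬((h i : Fin (w+1)) : ℕ) = w)), S a b w ((h i : Fin (w+1)) : ℕ)) = 1 := by
      refine Finset.prod_eq_one fun i hi => ?_
      simp only [Finset.filter_filter, Finset.mem_filter] at hi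
      rw [S, if_neg (by omega), if_neg (by omega)]
    rw [e1, e2, e3]
    ring
  · rw [if_neg hL]
    by_cases hE : h 0 = 0 ∧ h (Fin.last n) = 0
    · rw [if_pos hE]
      unfold IsLoop at hL
      push_neg at hL
      obtain ⟨t, ht⟩ := hL hE.1 hE.2
      refine (Finset.prod_eq_zero (Finset.mem_univ t) ?_).symm
      show (if _ then _ else _) = _
      rw [if_neg]
      intro hor
      apply ht
      rw [abs_eq (by norm_num : (0:ℤ) ≤ 1)]
      omega
    · rw [if_neg hE]


end ZAux

open ZAux Matrix in
/-- exact expression for `Z_{n,w}(1+λ², 1+λ⁻²)` for `λ > 0`, `λ ≠ 1`. -/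
theorem Z_on_curve (lam : ℝ) (hlam : 0 < lam) (hlam1 : lam ≠ 1) (w n : ℕ) (hw : 1 ≤ w) :
    Z n w (1 + lam ^ 2) (1 + lam⁻¹ ^ 2) =
      (1 - lam ^ 2) / (2 * lam ^ 2) * (lam ^ (2 * w) / (1 - lam ^ (2 * w))) *
        (lam + lam⁻¹) ^ n * (1 + (-1 : ℝ) ^ n) +
      2 ^ n / (lam * (w : ℝ)) *
        ∑ k ∈ Finset.Icc 1 (w - 1),
          ((lam + lam⁻¹) / 2 * Real.sin ((k : ℝ) * Real.pi / (w : ℝ)) ^ 2 /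
              (((lam - lam⁻¹) / 2) ^ 2 + Real.sin ((k : ℝ) * Real.pi / (w : ℝ)) ^ 2)) *
            Real.cos ((k : ℝ) * Real.pi / (w : ℝ)) ^ n := by
  have hlam0 : lam ≠ 0 := ne_of_gt hlam
  rw [show (1:ℝ) + lam ^ 2 = 1 + lam^2 from rfl]
  rw [Z_eq_pow (1+lam^2) (1+lam⁻¹^2) w n hw, pow_spectral lam hlam hlam1 w n hw]
  obtain ⟨m, rfl⟩ : ∃ m, w = m + 1 := ⟨w - 1, by omega⟩
  rw [Fin.sum_univ_eq_sum_range (fun k : ℕ =>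
    (uf lam (m+1) k 0 / (Uv lam (m+1) k ⬝ᵥ Vv lam (m+1) k)) *
      ev lam (m+1) k ^ n * Vv lam (m+1) k 0) (m+2)]
  rw [Finset.sum_range_succ, Finset.sum_range_succ']
  rw [show m + 1 - 1 = m from rfl]
  rw [show Finset.Icc 1 m = Finset.Ico 1 (m+1) from by rw [Finset.Ico_add_one_right_eq_Icc]]
  rw [Finset.sum_Ico_eq_sum_range]
  rw [show m + 1 - 1 = m from rfl]
  have hmid : ∀ i ∈ Finset.range m,
      (uf lam (m+1) (i+1) 0 / (Uv lam (m+1) (i+1) ⬝ᵥ Vv lam (m+1) (i+1))) *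
        ev lam (m+1) (i+1) ^ n * Vv lam (m+1) (i+1) 0
      = 2^n/(lam*((m+1:ℕ):ℝ)) *
          ((lam+lam⁻¹)/2 * Real.sin (((1+i:ℕ):ℝ) * Real.pi / ((m+1:ℕ):ℝ))^2 /
            (((lam-lam⁻¹)/2)^2 + Real.sin (((1+i:ℕ):ℝ) * Real.pi / ((m+1:ℕ):ℝ))^2)) *
          Real.cos (((1+i:ℕ):ℝ) * Real.pi / ((m+1:ℕ):ℝ))^n := by
    intro i hi
    have h1 := coeff_mid lam hlam hlam1 (m+1) (i+1) n (by omega)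
      (by simp only [Finset.mem_range] at hi; omega)
    have hth : th (m+1) (i+1) = ((1+i:ℕ):ℝ) * Real.pi / ((m+1:ℕ):ℝ) := by
      unfold th
      push_cast
      ring
    rw [hth] at h1
    exact h1
  rw [Finset.sum_congr rfl hmid]
  rw [Finset.mul_sum]
  have hedge := coeff_edge lam hlam hlam1 (m+1) n (by omega)
  simp only [mul_assoc] at hedge ⊢
  linarith [hedge]
end

section
/- Let x > 0 be real. For all sequences (n_j) of even positive integers and (w_j) of positive integers with n_j → ∞ and √(n_j)/w_j → x as j → ∞, one has lim_{j→∞} n_j^{1/2} · 2^{−n_j} · Z_{n_j, w_j}(2,2) = x · Σ_{k∈ℤ} e^{−π²k²x²/2}. -/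
open Filter
open Real Topology

noncomputable def omg (w : ℕ) (y : Fin (w+1)) : ℝ :=
  (if (y:ℕ) = 0 then 2 else 1) * (if (y:ℕ) = w then 2 else 1)

noncomputable def Tstep (w : ℕ) (f : Fin (w+1) → ℝ) : Fin (w+1) → ℝ :=
  fun y => ∑ z : Fin (w+1), (if |((z:ℤ) - (y:ℤ))| = 1 then omg w z * f z else 0)

noncomputable def S (w n : ℕ) (f : Fin (w+1) → ℝ) : ℝ :=
  ∑ h : Fin (n+1) → Fin (w+1),
    if (h 0 = 0 ∧ ∀ i : Fin n, |((h i.succ : ℤ) - (h i.castSucc : ℤ))| = 1)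
    then (∏ i : Fin n, omg w (h i.succ)) * f (h (Fin.last n)) else 0

lemma S_zero (w : ℕ) (f : Fin (w+1) → ℝ) : S w 0 f = f 0 := by
  rw [S, ← (Equiv.funUnique (Fin 1) (Fin (w+1))).symm.sum_comp]
  simp [Fin.last]

lemma forall_fin_castSucc {n : ℕ} {P : Fin (n+1) → Prop} :
    (∀ i : Fin (n+1), P i) ↔ (∀ j : Fin n, P j.castSucc) ∧ P (Fin.last n) := by
  constructor
  · exact fun h => ⟨fun j => h _, h _⟩
  · rintro ⟨h1, h2⟩ i
    induction i using Fin.lastCases with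
    | last => exact h2
    | cast j => exact h1 j

lemma snoc_zero' {n : ℕ} {α : Type} (g : Fin (n+1) → α) (z : α) :
    (Fin.snoc g z : Fin (n+2) → α) 0 = g 0 := by
  show (Fin.snoc g z : Fin (n+2) → α) (Fin.castSucc 0) = g 0
  rw [Fin.snoc_castSucc]

lemma snoc_last' {n : ℕ} {α : Type} (g : Fin (n+1) → α) (z : α) :
    (Fin.snoc g z : Fin (n+2) → α) (Fin.last (n+1)) = z := by simp

lemma snoc_cs {n : ℕ} {α : Type} (g : Fin (n+1) → α) (z : α) (j : Fin (n+1)) :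
    (Fin.snoc g z : Fin (n+2) → α) j.castSucc = g j := by rw [Fin.snoc_castSucc]

lemma snoc_cs_succ {n : ℕ} {α : Type} (g : Fin (n+1) → α) (z : α) (j : Fin n) :
    (Fin.snoc g z : Fin (n+2) → α) j.castSucc.succ = g j.succ := by
  rw [Fin.succ_castSucc, Fin.snoc_castSucc]

lemma snoc_last_succ {n : ℕ} {α : Type} (g : Fin (n+1) → α) (z : α) :
    (Fin.snoc g z : Fin (n+2) → α) (Fin.last n).succ = z := by
  have h : (Fin.last n).succ = Fin.last (n+1) := rfl
  rw [h, snoc_last']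

lemma S_succ (w n : ℕ) (f : Fin (w+1) → ℝ) : S w (n+1) f = S w n (Tstep w f) := by
  rw [S, ← (Fin.snocEquiv (fun _ => Fin (w+1))).sum_comp, Fintype.sum_prod_type]
  rw [S]
  rw [Finset.sum_comm]
  refine Finset.sum_congr rfl fun g _ => ?_
  have hsnoc : ∀ z : Fin (w+1), (Fin.snocEquiv (fun _ => Fin (w+1)) (z, g)) = Fin.snoc g z :=
    fun z => rfl
  by_cases hg : (g 0 = 0 ∧ ∀ i : Fin n, |((g i.succ : ℤ) - (g i.castSucc : ℤ))| = 1)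
  · rw [if_pos hg, Tstep, Finset.mul_sum]
    refine Finset.sum_congr rfl fun z _ => ?_
    rw [hsnoc]
    have hcond : ((Fin.snoc g z : Fin (n+2) → Fin (w+1)) 0 = 0 ∧
          ∀ i : Fin (n+1), |(((Fin.snoc g z : Fin (n+2) → Fin (w+1)) i.succ : ℤ) -
            ((Fin.snoc g z : Fin (n+2) → Fin (w+1)) i.castSucc : ℤ))| = 1)
        ↔ (|((z : ℤ) - (g (Fin.last n) : ℤ))| = 1) := by
      rw [snoc_zero', forall_fin_castSucc]
      constructor
      · rintro ⟨-, -, hl⟩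
        rwa [snoc_last_succ, snoc_cs] at hl
      · intro hz
        refine ⟨hg.1, fun j => ?_, ?_⟩
        · rw [snoc_cs_succ, snoc_cs]
          exact hg.2 j
        · rw [snoc_last_succ, snoc_cs]; exact hz
    by_cases hz : |((z : ℤ) - (g (Fin.last n) : ℤ))| = 1
    · rw [if_pos (hcond.2 hz), if_pos hz]
      rw [Fin.prod_univ_castSucc
        (f := fun i : Fin (n+1) => omg w ((Fin.snoc g z : Fin (n+2) → Fin (w+1)) i.succ))]
      simp only [snoc_cs_succ, snoc_last_succ, snoc_last']
      ring
    · rw [if_neg (fun hc => hz (hcond.1 hc)), if_neg hz, mul_zero]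
  · rw [if_neg hg]
    refine Finset.sum_eq_zero fun z _ => ?_
    rw [hsnoc]
    refine if_neg fun hc => hg ?_
    refine ⟨(snoc_zero' g z) ▸ hc.1, fun j => ?_⟩
    have := hc.2 j.castSucc
    rwa [Fin.succ_castSucc, Fin.snoc_castSucc, Fin.snoc_castSucc] at this

lemma S_iterate (w : ℕ) : ∀ n (f : Fin (w+1) → ℝ), S w n f = (Tstep w)^[n] f 0
  | 0, f => S_zero w f
  | (n+1), f => by rw [S_succ, S_iterate w n, Function.iterate_succ_apply]


lemma prod_ite_two {ι : Type*} [Fintype ι] (P : ι → Prop) [DecidablePred P] :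
    ∏ i : ι, (if P i then (2:ℝ) else 1) = 2 ^ (Finset.univ.filter P).card := by
  rw [Finset.prod_ite, Finset.prod_const, Finset.prod_const_one, mul_one]

lemma weight_eq {n w : ℕ} (hw : 0 < w) (h : Fin (n+1) → Fin (w+1)) (h0 : h 0 = 0) :
    (2:ℝ) ^ (Finset.univ.filter fun i : Fin (n + 1) => i ≠ 0 ∧ (h i : ℕ) = 0).card *
      2 ^ (Finset.univ.filter fun i : Fin (n + 1) => (h i : ℕ) = w).card
    = ∏ i : Fin n, omg w (h i.succ) := by
  have hcard1 : (Finset.univ.filter fun i : Fin n => (h i.succ : ℕ) = 0).card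
      = (Finset.univ.filter fun i : Fin (n + 1) => i ≠ 0 ∧ (h i : ℕ) = 0).card := by
    refine Finset.card_bij (fun i _ => i.succ) ?_ ?_ ?_
    · intro i hi
      simp only [Finset.mem_filter, Finset.mem_univ, true_and] at hi ⊢
      exact ⟨Fin.succ_ne_zero i, hi⟩
    · intro i _ j _ hij
      exact Fin.succ_injective _ hij
    · intro j hj
      simp only [Finset.mem_filter, Finset.mem_univ, true_and] at hj
      obtain ⟨i, rfl⟩ := Fin.eq_succ_of_ne_zero hj.1
      exact ⟨i, by simp [hj.2]; exact Fin.ext hj.2, rfl⟩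
  have hcard2 : (Finset.univ.filter fun i : Fin n => (h i.succ : ℕ) = w).card
      = (Finset.univ.filter fun i : Fin (n + 1) => (h i : ℕ) = w).card := by
    refine Finset.card_bij (fun i _ => i.succ) ?_ ?_ ?_
    · intro i hi
      simp only [Finset.mem_filter, Finset.mem_univ, true_and] at hi ⊢
      exact hi
    · intro i _ j _ hij
      exact Fin.succ_injective _ hij
    · intro j hj
      simp only [Finset.mem_filter, Finset.mem_univ, true_and] at hj
      have hj0 : j ≠ 0 := by
        intro he
        rw [he, h0] at hj
        simp at hj
        omega
      obtain ⟨i, rfl⟩ := Fin.eq_succ_of_ne_zero hj0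
      exact ⟨i, by simp [hj], rfl⟩
  rw [← hcard1, ← hcard2]
  unfold omg
  rw [Finset.prod_mul_distrib, prod_ite_two, prod_ite_two]

lemma Z_eq (n w : ℕ) (hw : 0 < w) :
    Z n w 2 2 = S w n (fun y => if y = 0 then 1 else 0) := by
  rw [Z, S]
  refine Finset.sum_congr rfl fun h _ => ?_
  by_cases hl : IsLoop h
  · obtain ⟨h0, hlast, hsteps⟩ := hl
    rw [if_pos ⟨h0, hlast, hsteps⟩, if_pos ⟨h0, hsteps⟩, hlast, if_pos rfl, mul_one,
      weight_eq hw h h0]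
  · rw [if_neg hl]
    by_cases hc : (h 0 = 0 ∧ ∀ i : Fin n, |((h i.succ : ℤ) - (h i.castSucc : ℤ))| = 1)
    · rw [if_pos hc]
      have hne : h (Fin.last n) ≠ 0 := fun he => hl ⟨hc.1, he, hc.2⟩
      rw [if_neg hne, mul_zero]
    · rw [if_neg hc]

lemma omg_pos {w : ℕ} (y : Fin (w+1)) : 0 < omg w y := by
  unfold omg; split <;> split <;> norm_num

lemma adj_iff (w : ℕ) (y z : Fin (w+1)) :
    |((z:ℤ) - (y:ℤ))| = 1 ↔ (((z:ℕ) + 1 = (y:ℕ)) ∨ ((z:ℕ) = (y:ℕ) + 1)) := by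
  rw [abs_eq (by norm_num : (0:ℤ) ≤ 1)]
  omega

lemma sum_adj (w : ℕ) (y : Fin (w+1)) (F : Fin (w+1) → ℝ) :
    ∑ z : Fin (w+1), (if |((z:ℤ) - (y:ℤ))| = 1 then F z else 0)
    = (∑ z : Fin (w+1), if (z:ℕ) + 1 = (y:ℕ) then F z else 0)
      + (∑ z : Fin (w+1), if (z:ℕ) = (y:ℕ) + 1 then F z else 0) := by
  rw [← Finset.sum_add_distrib]
  refine Finset.sum_congr rfl fun z _ => ?_
  by_cases h1 : (z:ℕ) + 1 = (y:ℕ)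
  · rw [if_pos h1, if_pos ((adj_iff w y z).2 (Or.inl h1)), if_neg (by omega), add_zero]
  · by_cases h2 : (z:ℕ) = (y:ℕ) + 1
    · rw [if_pos h2, if_pos ((adj_iff w y z).2 (Or.inr h2)), if_neg h1, zero_add]
    · rw [if_neg h1, if_neg h2, if_neg (fun hc => by rcases (adj_iff w y z).1 hc with h | h
        <;> omega), add_zero]

lemma sum_val_eq {w : ℕ} (c : ℕ) (hc : c ≤ w) (F : Fin (w+1) → ℝ) :
    ∑ z : Fin (w+1), (if (z:ℕ) = c then F z else 0) = F ⟨c, by omega⟩ := by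
  have key : ∀ z : Fin (w+1), ((z:ℕ) = c) ↔ z = ⟨c, by omega⟩ := fun z => by
    rw [Fin.ext_iff]
  simp_rw [key]
  rw [Finset.sum_ite_eq' Finset.univ _ F, if_pos (Finset.mem_univ _)]

lemma sum_val_none {w : ℕ} (c : ℕ) (hc : w < c) (F : Fin (w+1) → ℝ) :
    ∑ z : Fin (w+1), (if (z:ℕ) = c then F z else 0) = 0 :=
  Finset.sum_eq_zero fun z _ => if_neg (by have := z.isLt; omega)

noncomputable def psi (w r : ℕ) (y : Fin (w+1)) : ℝ :=
  2 / omg w y * Real.cos (Real.pi * r * y / w)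

lemma omg_psi {w : ℕ} (r : ℕ) (z : Fin (w+1)) :
    omg w z * psi w r z = 2 * Real.cos (Real.pi * r * z / w) := by
  rw [psi, ← mul_assoc, mul_div_cancel₀ _ (omg_pos z).ne']

lemma psi_zero {w : ℕ} (hw : 0 < w) (r : ℕ) : psi w r 0 = 1 := by
  have h0 : ((0 : Fin (w+1)) : ℕ) = 0 := rfl
  rw [psi]
  have : omg w 0 = 2 := by
    unfold omg
    rw [h0, if_pos rfl, if_neg (by omega)]
    norm_num
  rw [this, h0]
  norm_num

lemma Tstep_psi {w : ℕ} (hw : 0 < w) (r : ℕ) :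
    Tstep w (psi w r) = fun y => (2 * Real.cos (Real.pi * r / w)) * psi w r y := by
  have hw0 : (w:ℝ) ≠ 0 := Nat.cast_ne_zero.2 hw.ne'
  funext y
  rw [Tstep]
  simp_rw [omg_psi]
  rw [sum_adj]
  rcases Nat.eq_zero_or_pos (y:ℕ) with hy0 | hy0
  · -- y = 0 : only neighbour is 1
    rw [Finset.sum_eq_zero (fun z _ => if_neg (by omega)), zero_add, hy0, zero_add,
      sum_val_eq 1 hw]
    rw [psi]
    have homg : omg w y = 2 := by
      unfold omg
      rw [if_pos hy0, if_neg (by omega)]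
      norm_num
    rw [homg, hy0]
    push_cast
    norm_num
  · rcases Nat.lt_or_ge (y:ℕ) w with hyw | hyw
    · -- interior
      have hconv : ∀ z : Fin (w+1), ((z:ℕ) + 1 = (y:ℕ)) ↔ ((z:ℕ) = (y:ℕ) - 1) := by
        intro z; omega
      simp_rw [hconv]
      rw [sum_val_eq ((y:ℕ)-1) (by omega), sum_val_eq ((y:ℕ)+1) (by omega)]
      rw [psi]
      have homg : omg w y = 1 := by
        unfold omg
        rw [if_neg (by omega), if_neg (by omega)]
        norm_num
      rw [homg]
      have e1 : (Real.pi * r * (((⟨(y:ℕ)-1, by omega⟩ : Fin (w+1)) : ℕ) : ℝ) / w)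
          = Real.pi * r * (y:ℕ) / w - Real.pi * r / w := by
        have : (((⟨(y:ℕ)-1, by omega⟩ : Fin (w+1)) : ℕ) : ℝ) = ((y:ℕ) : ℝ) - 1 := by
          simp only []
          push_cast [Nat.cast_sub (by omega : 1 ≤ (y:ℕ))]
          ring
        rw [this]; field_simp
      have e2 : (Real.pi * r * (((⟨(y:ℕ)+1, by omega⟩ : Fin (w+1)) : ℕ) : ℝ) / w)
          = Real.pi * r * (y:ℕ) / w + Real.pi * r / w := by
        have : (((⟨(y:ℕ)+1, by omega⟩ : Fin (w+1)) : ℕ) : ℝ) = ((y:ℕ) : ℝ) + 1 := by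
          push_cast; ring
        rw [this]; field_simp
      rw [e1, e2, Real.cos_sub, Real.cos_add]
      ring
    · -- y = w
      have hyw' : (y:ℕ) = w := by have := y.isLt; omega
      have hconv : ∀ z : Fin (w+1), ((z:ℕ) + 1 = (y:ℕ)) ↔ ((z:ℕ) = w - 1) := by
        intro z; omega
      simp_rw [hconv, hyw']
      rw [sum_val_eq (w-1) (by omega), sum_val_none (w+1) (by omega), add_zero]
      rw [psi]
      have homg : omg w y = 2 := by
        unfold omg
        rw [if_neg (by omega), if_pos hyw']
        norm_num
      rw [homg]
      have e1 : (Real.pi * r * (((⟨w-1, by omega⟩ : Fin (w+1)) : ℕ) : ℝ) / w)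
          = Real.pi * r - Real.pi * r / w := by
        have : (((⟨w-1, by omega⟩ : Fin (w+1)) : ℕ) : ℝ) = (w : ℝ) - 1 := by
          simp only []
          push_cast [Nat.cast_sub (by omega : 1 ≤ w)]
          ring
        rw [this]; field_simp
      have e2 : Real.pi * r * ((w:ℕ) : ℝ) / w = Real.pi * r := by
        field_simp
      rw [e1, hyw', e2, Real.cos_sub]
      have hs : Real.sin (Real.pi * r) = 0 := by
        rw [mul_comm]; exact Real.sin_nat_mul_pi r
      rw [hs]
      ring

lemma Tstep_smul (w : ℕ) (c : ℝ) (f : Fin (w+1) → ℝ) :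
    Tstep w (fun y => c * f y) = fun y => c * Tstep w f y := by
  funext y
  rw [Tstep, Tstep, Finset.mul_sum]
  refine Finset.sum_congr rfl fun z _ => ?_
  split <;> ring

lemma Tstep_iter_smul (w : ℕ) (n : ℕ) (c : ℝ) (f : Fin (w+1) → ℝ) :
    (Tstep w)^[n] (fun y => c * f y) = fun y => c * (Tstep w)^[n] f y := by
  induction n generalizing f with
  | zero => simp
  | succ n ih =>
    rw [Function.iterate_succ_apply, Function.iterate_succ_apply, Tstep_smul, ih]

lemma Tstep_iter_psi {w : ℕ} (hw : 0 < w) (r n : ℕ) :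
    (Tstep w)^[n] (psi w r) = fun y => (2 * Real.cos (Real.pi * r / w))^n * psi w r y := by
  induction n with
  | zero => simp
  | succ n ih =>
    rw [Function.iterate_succ_apply, Tstep_psi hw, Tstep_iter_smul, ih]
    funext y
    ring

lemma Tstep_finsum {w : ℕ} {ι : Type*} (s : Finset ι) (G : ι → Fin (w+1) → ℝ) :
    Tstep w (fun y => ∑ r ∈ s, G r y) = fun y => ∑ r ∈ s, Tstep w (G r) y := by
  funext y
  rw [Tstep]
  have : ∀ z : Fin (w+1), (if |((z:ℤ) - (y:ℤ))| = 1 then omg w z * ∑ r ∈ s, G r z else 0)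
      = ∑ r ∈ s, (if |((z:ℤ) - (y:ℤ))| = 1 then omg w z * G r z else 0) := by
    intro z
    split
    · rw [Finset.mul_sum]
    · rw [Finset.sum_const_zero]
  simp_rw [this]
  rw [Finset.sum_comm]
  rfl

lemma Tstep_iter_finsum {w : ℕ} {ι : Type*} (n : ℕ) (s : Finset ι) (G : ι → Fin (w+1) → ℝ) :
    (Tstep w)^[n] (fun y => ∑ r ∈ s, G r y) = fun y => ∑ r ∈ s, (Tstep w)^[n] (G r) y := by
  induction n generalizing G with
  | zero => simp
  | succ n ih =>
    rw [Function.iterate_succ_apply, Tstep_finsum, ih]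
    simp_rw [← Function.iterate_succ_apply]

lemma cos_sum {w : ℕ} (hw : 0 < w) (y : Fin (w+1)) :
    ∑ r ∈ Finset.range (2*w), Real.cos (Real.pi * r * y / w)
      = if (y:ℕ) = 0 then (2*(w:ℝ)) else 0 := by
  have hw0 : (w:ℝ) ≠ 0 := Nat.cast_ne_zero.2 hw.ne'
  by_cases hy : (y:ℕ) = 0
  · rw [if_pos hy, hy]
    simp
  · rw [if_neg hy]
    set θ : ℝ := Real.pi * y / w with hθ
    have hθpos : 0 < θ := by
      apply div_pos (mul_pos Real.pi_pos (by positivity))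
      positivity
    have hθle : θ ≤ Real.pi := by
      rw [hθ, div_le_iff₀ (by positivity)]
      have : ((y:ℕ):ℝ) ≤ (w:ℝ) := by
        have := y.isLt
        exact_mod_cast Nat.le_of_lt_succ this
      nlinarith [Real.pi_pos]
    set ζ : ℂ := Complex.exp (θ * Complex.I) with hζ
    have hζne : ζ ≠ 1 := by
      intro h
      rw [hζ, Complex.exp_eq_one_iff] at h
      obtain ⟨k, hk⟩ := h
      have : (θ : ℂ) = (k : ℂ) * (2 * Real.pi) := by
        have h2 : (θ : ℂ) * Complex.I = ((k : ℂ) * (2 * Real.pi)) * Complex.I := by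
          rw [hk]; ring
        exact mul_right_cancel₀ Complex.I_ne_zero h2
      have hre : θ = (k : ℝ) * (2 * Real.pi) := by
        exact_mod_cast this
      rcases le_or_gt (k:ℝ) 0 with hk0 | hk0
      · nlinarith [Real.pi_pos]
      · have : (1:ℝ) ≤ (k:ℝ) := by exact_mod_cast hk0
        nlinarith [Real.pi_pos]
    have hgeom : ∑ r ∈ Finset.range (2*w), ζ^r = 0 := by
      rw [geom_sum_eq hζne]
      have : ζ^(2*w) = 1 := by
        rw [hζ, ← Complex.exp_nat_mul]
        have hwC : (w:ℂ) ≠ 0 := Nat.cast_ne_zero.2 hw.ne'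
        have harg : (2*w : ℕ) * (θ * Complex.I) = (y : ℕ) * (2 * Real.pi * Complex.I) := by
          push_cast
          rw [hθ]
          push_cast
          field_simp
        rw [harg, Complex.exp_nat_mul_two_pi_mul_I]
      rw [this, sub_self, zero_div]
    have hre : ∀ r : ℕ, Real.cos (Real.pi * r * y / w) = (ζ^r).re := by
      intro r
      rw [hζ, ← Complex.exp_nat_mul]
      have : (r:ℂ) * (θ * Complex.I) = ((r * θ : ℝ) : ℂ) * Complex.I := by
        push_cast; ring
      rw [this, Complex.exp_ofReal_mul_I_re]
      congr 1
      rw [hθ]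
      field_simp
    simp_rw [hre]
    rw [← Complex.re_sum, hgeom]
    rfl

lemma delta_expand {w : ℕ} (hw : 0 < w) :
    (fun y : Fin (w+1) => if y = 0 then (1:ℝ) else 0)
      = fun y => ∑ r ∈ Finset.range (2*w), (1/(2*(w:ℝ))) * psi w r y := by
  have hw0 : (w:ℝ) ≠ 0 := Nat.cast_ne_zero.2 hw.ne'
  funext y
  have : ∀ r : ℕ, (1/(2*(w:ℝ))) * psi w r y
      = (1/(2*(w:ℝ))) * (2 / omg w y) * Real.cos (Real.pi * r * y / w) := by
    intro r; rw [psi]; ring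
  simp_rw [this]
  rw [← Finset.mul_sum, cos_sum hw]
  by_cases hy : (y:ℕ) = 0
  · have hy' : y = 0 := by
      ext; exact hy
    rw [if_pos hy, if_pos hy']
    have homg : omg w y = 2 := by
      unfold omg
      rw [if_pos hy, if_neg (by omega)]
      norm_num
    rw [homg]
    field_simp
  · have hy' : y ≠ 0 := by
      intro hc; exact hy (by rw [hc]; rfl)
    rw [if_neg hy, if_neg hy', mul_zero]


theorem Z_formula {w : ℕ} (hw : 0 < w) (n : ℕ) :
    Z n w 2 2 = (2:ℝ)^n / (2*(w:ℝ)) * ∑ r ∈ Finset.range (2*w), (Real.cos (Real.pi*r/w))^n := by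
  rw [Z_eq n w hw, S_iterate, delta_expand hw, Tstep_iter_finsum]
  have : ∀ r : ℕ, (Tstep w)^[n] (fun y => (1/(2*(w:ℝ))) * psi w r y) 0
      = (1/(2*(w:ℝ))) * (2 * Real.cos (Real.pi*r/w))^n := by
    intro r
    rw [Tstep_iter_smul, Tstep_iter_psi hw]
    simp only []
    rw [psi_zero hw, mul_one]
  simp_rw [this]
  rw [← Finset.mul_sum, Finset.mul_sum, Finset.mul_sum]
  refine Finset.sum_congr rfl fun r _ => ?_
  rw [mul_pow]
  ring

lemma cos_le_one_sub_sq_div_six {t : ℝ} (ht : |t| ≤ π/2) : Real.cos t ≤ 1 - t^2/6 := by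
  have hπ : π < 3.15 := Real.pi_lt_d2
  rcases le_or_gt |t| 1 with h1 | h1
  · have hb := Real.cos_bound h1
    have habs : |t|^4 = t^4 := by
      rw [← abs_pow]; exact abs_of_nonneg (by positivity)
    rw [habs, abs_le] at hb
    have h2 : t^2 ≤ 1 := by nlinarith [abs_nonneg t, sq_abs t]
    nlinarith [hb.2]
  · have hle : |t| ≤ π := le_trans ht (by nlinarith [Real.pi_pos])
    have hc : Real.cos |t| ≤ Real.cos 1 :=
      Real.cos_le_cos_of_nonneg_of_le_pi (by norm_num) hle h1.le
    have hcos1 : Real.cos 1 ≤ 1 - 1/2 + 5/96 := by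
      have hb := Real.cos_bound (by norm_num : |(1:ℝ)| ≤ 1)
      rw [abs_le] at hb
      norm_num at hb ⊢
      linarith [hb.2]
    have ht2 : t^2 ≤ (π/2)^2 := by nlinarith [sq_abs t, abs_nonneg t]
    have hca : Real.cos t = Real.cos |t| := (Real.cos_abs t).symm
    nlinarith [Real.pi_pos]

lemma log_cos_bounds {t : ℝ} (ht : |t| ≤ 1/2) :
    -t^2/2 - t^4 ≤ Real.log (Real.cos t) ∧ Real.log (Real.cos t) ≤ -t^2/2 + t^4 := by
  have hb := Real.cos_bound (le_trans ht (by norm_num))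
  have habs : |t|^4 = t^4 := by
    rw [← abs_pow]; exact abs_of_nonneg (by positivity)
  rw [habs, abs_le] at hb
  have ht2 : t^2 ≤ 1/4 := by nlinarith [sq_abs t, abs_nonneg t]
  have ht4 : t^4 ≤ 1/16 := by nlinarith [sq_nonneg t]
  have hcpos : 0 < Real.cos t := by nlinarith [hb.1]
  have hcle : Real.cos t ≤ 1 := Real.cos_le_one t
  constructor
  · have h2 : Real.log (Real.cos t)⁻¹ ≤ (Real.cos t)⁻¹ - 1 :=
      Real.log_le_sub_one_of_pos (by positivity)
    rw [Real.log_inv] at h2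
    have h4 : (Real.cos t)⁻¹ - 1 ≤ t^2/2 + t^4 := by
      rw [inv_eq_one_div, div_sub' hcpos.ne', div_le_iff₀ hcpos]
      nlinarith [hb.1, hb.2, sq_nonneg t, sq_nonneg (t^2)]
    linarith
  · have := Real.log_le_sub_one_of_pos hcpos
    nlinarith [hb.2]

lemma summable_gauss (c : ℝ) (hc : 0 < c) :
    Summable (fun k : ℤ => Real.exp (-c * (k:ℝ)^2)) := by
  have hkey : ∀ m : ℕ, Real.exp (-c * (m:ℝ)^2) ≤ Real.exp (-c) ^ m := by
    intro m
    have h1 : Real.exp (-c * (m:ℝ)^2) = Real.exp (-c) ^ (m^2) := by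
      rw [← Real.exp_nat_mul]; congr 1; push_cast; ring
    rw [h1]
    exact pow_le_pow_of_le_one (Real.exp_pos _).le
      (Real.exp_le_one_iff.2 (by linarith)) (Nat.le_self_pow (by norm_num) m)
  have hgeo : Summable (fun m : ℕ => Real.exp (-c) ^ m) :=
    summable_geometric_of_lt_one (Real.exp_pos _).le
      (Real.exp_lt_one_iff.2 (by linarith))
  apply Summable.of_nat_of_neg_add_one
  · exact Summable.of_nonneg_of_le (fun m => (Real.exp_pos _).le) hkey hgeo
  · refine Summable.of_nonneg_of_le (fun m => (Real.exp_pos _).le) (fun m => ?_)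
      (hgeo.comp_injective (fun a b h => by simpa using h : Function.Injective (fun m : ℕ => m + 1)))
    have : ((-(m+1:ℤ) : ℤ) : ℝ)^2 = ((m+1:ℕ) : ℝ)^2 := by push_cast; ring
    rw [this]
    exact hkey (m+1)

noncomputable def Ffun (N W : ℕ) (k : ℤ) : ℝ :=
  if (0 ≤ k ∧ 2*k ≤ (W:ℤ)) ∨ (k < 0 ∧ 2*(-k) < (W:ℤ)) then (Real.cos (π * k / W))^N else 0

lemma Ffun_nat (N W : ℕ) (r : ℕ) :
    Ffun N W (r:ℤ) = if 2*r ≤ W then (Real.cos (π * r / W))^N else 0 := by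
  rw [Ffun]
  have hcond : ((0 ≤ (r:ℤ) ∧ 2*(r:ℤ) ≤ (W:ℤ)) ∨ ((r:ℤ) < 0 ∧ 2*(-(r:ℤ)) < (W:ℤ)))
      ↔ 2*r ≤ W := by
    constructor
    · rintro (⟨-, h⟩ | ⟨h, -⟩) <;> omega
    · intro h; left; constructor <;> omega
  simp only [hcond]
  congr 1

lemma Ffun_neg (N W : ℕ) (s : ℕ) :
    Ffun N W (-((s:ℤ)+1)) = if 2*(s+1) < W then (Real.cos (π * (s+1) / W))^N else 0 := by
  rw [Ffun]
  have hcond : ((0 ≤ -((s:ℤ)+1) ∧ 2*(-((s:ℤ)+1)) ≤ (W:ℤ)) ∨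
      (-((s:ℤ)+1) < 0 ∧ 2*(-(-((s:ℤ)+1))) < (W:ℤ))) ↔ 2*(s+1) < W := by
    constructor
    · rintro (⟨h, -⟩ | ⟨-, h⟩) <;> omega
    · intro h; right; constructor <;> omega
  simp only [hcond]
  congr 1
  have : π * ((-((s:ℤ)+1) : ℤ) : ℝ) / W = -(π * (((s:ℕ):ℝ)+1) / W) := by
    push_cast; ring
  rw [this, Real.cos_neg]

lemma tsum_Ffun (N W : ℕ) (hw : 0 < W) (hN : Even N) :
    ∑' k : ℤ, Ffun N W k = ∑ r ∈ Finset.range W, (Real.cos (π * r / W))^N := by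
  have hvan1 : ∀ m : ℕ, m ∉ Finset.range W → Ffun N W m = 0 := by
    intro m hm
    rw [Finset.mem_range, not_lt] at hm
    rw [Ffun_nat, if_neg (by omega)]
  have hvan2 : ∀ m : ℕ, m ∉ Finset.range W → Ffun N W (-((m:ℤ)+1)) = 0 := by
    intro m hm
    rw [Finset.mem_range, not_lt] at hm
    rw [Ffun_neg, if_neg (by omega)]
  have h₁ : Summable (fun m : ℕ => Ffun N W m) := summable_of_ne_finset_zero hvan1
  have h₂ : Summable (fun m : ℕ => Ffun N W (-((m:ℤ)+1))) := by
    apply summable_of_ne_finset_zero (s := Finset.range W)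
    intro m hm
    exact hvan2 m hm
  have hint : ∀ m : ℕ, (-(((m:ℤ)) + 1)) = (-((m:ℤ)+1)) := fun m => rfl
  rw [tsum_of_nat_of_neg_add_one h₁ h₂, tsum_eq_sum hvan1, tsum_eq_sum hvan2]
  simp_rw [Ffun_nat, Ffun_neg]
  -- reflection on the negative part
  have hreflect : ∑ s ∈ Finset.range W, (if 2*(s+1) < W then (Real.cos (π * (s+1) / W))^N else 0)
      = ∑ r ∈ Finset.range W, (if W < 2*r then (Real.cos (π * r / W))^N else 0) := by
    refine Finset.sum_nbij' (fun s => W - 1 - s) (fun r => W - 1 - r) ?_ ?_ ?_ ?_ ?_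
    · intro s hs; simp only [Finset.mem_range] at hs ⊢; omega
    · intro r hr; simp only [Finset.mem_range] at hr ⊢; omega
    · intro s hs; simp only [Finset.mem_range] at hs ⊢; omega
    · intro r hr; simp only [Finset.mem_range] at hr ⊢; omega
    · intro s hs
      rw [Finset.mem_range] at hs
      by_cases hc : 2*(s+1) < W
      · rw [if_pos hc, if_pos (show W < 2*((fun s => W - 1 - s) s) from by dsimp only; omega)]
        have hcast : ((W - 1 - s : ℕ) : ℝ) = (W:ℝ) - ((s:ℝ)+1) := by
          have : (W - 1 - s : ℕ) = W - (s+1) := by omega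
          rw [this, Nat.cast_sub (by omega)]
          push_cast
          ring
        have hWne : (W:ℝ) ≠ 0 := Nat.cast_ne_zero.2 hw.ne'
        have harg : π * ((W - 1 - s : ℕ) : ℝ) / W = π - π * ((s:ℝ)+1) / W := by
          rw [hcast]; field_simp
        rw [harg, Real.cos_pi_sub, hN.neg_pow]
      · rw [if_neg hc, if_neg (show ¬ W < 2*((fun s => W - 1 - s) s) from by dsimp only; omega)]
  rw [hreflect, ← Finset.sum_add_distrib]
  refine Finset.sum_congr rfl fun r hr => ?_
  rw [Finset.mem_range] at hr
  by_cases hc : 2*r ≤ W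
  · rw [if_pos hc, if_neg (by omega), add_zero]
  · rw [if_neg hc, if_pos (by omega), zero_add]

lemma sum_range_two_mul (N W : ℕ) (hw : 0 < W) (hN : Even N) :
    ∑ r ∈ Finset.range (2*W), (Real.cos (π * r / W))^N
      = 2 * ∑ r ∈ Finset.range W, (Real.cos (π * r / W))^N := by
  have hWne : (W:ℝ) ≠ 0 := Nat.cast_ne_zero.2 hw.ne'
  rw [two_mul, Finset.sum_range_add]
  have h : ∀ i ∈ Finset.range W,
      (Real.cos (π * ((W + i : ℕ):ℝ) / W))^N = (Real.cos (π * i / W))^N := by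
    intro i _
    have harg : π * ((W + i : ℕ):ℝ) / W = π * i / W + π := by
      push_cast; field_simp; ring
    rw [harg, Real.cos_add_pi, hN.neg_pow]
  rw [Finset.sum_congr rfl h]
  ring

lemma Fbound (x : ℝ) (hx : 0 < x) (N W : ℕ) (hW : 0 < W)
    (h2 : x^2/2 ≤ (N:ℝ)/(W:ℝ)^2) (k : ℤ) :
    ‖Ffun N W k‖ ≤ Real.exp (-(π^2*x^2/12) * (k:ℝ)^2) := by
  rw [Real.norm_eq_abs, Ffun]
  have hWpos : (0:ℝ) < W := by exact_mod_cast hW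
  split
  case isTrue h =>
    set t : ℝ := π * k / W with hht
    have hk2 : 2 * |(k:ℝ)| ≤ W := by
      rcases h with ⟨h1, h2'⟩ | ⟨h1, h2'⟩
      · rw [abs_of_nonneg (by exact_mod_cast h1 : (0:ℝ) ≤ (k:ℝ))]
        exact_mod_cast h2'
      · rw [abs_of_neg (by exact_mod_cast h1 : (k:ℝ) < 0)]
        have : (2 * (-k) : ℤ) ≤ (W:ℤ) := le_of_lt h2'
        exact_mod_cast this
    have ht : |t| ≤ π/2 := by
      rw [hht, abs_div, abs_mul, abs_of_nonneg Real.pi_pos.le, abs_of_nonneg hWpos.le,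
        div_le_iff₀ hWpos]
      nlinarith [Real.pi_pos]
    have hc0 : 0 ≤ Real.cos t := Real.cos_nonneg_of_mem_Icc (abs_le.1 ht |> fun hh => ⟨hh.1, hh.2⟩)
    have hc1 : Real.cos t ≤ 1 - t^2/6 := cos_le_one_sub_sq_div_six ht
    have h16 : (0:ℝ) ≤ 1 - t^2/6 := by nlinarith [sq_abs t, abs_nonneg t, Real.pi_lt_d2]
    have hp1 : Real.cos t ^ N ≤ (1 - t^2/6)^N := pow_le_pow_left₀ hc0 hc1 N
    have hp2 : (1 - t^2/6)^N ≤ Real.exp (-(t^2/6))^N := by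
      apply pow_le_pow_left₀ h16
      linarith [Real.add_one_le_exp (-(t^2/6))]
    have hp3 : Real.exp (-(t^2/6))^N = Real.exp (-(N:ℝ)*t^2/6) := by
      rw [← Real.exp_nat_mul]; congr 1; ring
    have hp4 : Real.exp (-(N:ℝ)*t^2/6) ≤ Real.exp (-(π^2*x^2/12) * (k:ℝ)^2) := by
      apply Real.exp_le_exp.2
      have ht2 : t^2 = π^2 * (k:ℝ)^2 / (W:ℝ)^2 := by
        rw [hht]; field_simp
      rw [ht2]
      have hk2' : 0 ≤ (k:ℝ)^2 := sq_nonneg _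
      have := mul_le_mul_of_nonneg_right h2 (mul_nonneg (mul_nonneg (sq_nonneg π) hk2') (by norm_num : (0:ℝ) ≤ 1/6))
      calc -(N:ℝ) * (π^2*(k:ℝ)^2/(W:ℝ)^2) / 6
          = -(((N:ℝ)/(W:ℝ)^2) * (π^2*(k:ℝ)^2 * (1/6))) := by field_simp
        _ ≤ -((x^2/2) * (π^2*(k:ℝ)^2 * (1/6))) := by linarith
        _ = -(π^2*x^2/12) * (k:ℝ)^2 := by ring
    rw [abs_of_nonneg (pow_nonneg hc0 N)]
    calc Real.cos t ^ N ≤ _ := hp1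
      _ ≤ _ := hp2
      _ = _ := hp3
      _ ≤ _ := hp4
  case isFalse h =>
    simp [Real.exp_pos]
    positivity

lemma ptwise (x : ℝ) (hx : 0 < x) (n w : ℕ → ℕ) (hnpos : ∀ j, 0 < n j)
    (hwpos : ∀ j, 0 < w j)
    (hn : Tendsto n atTop atTop)
    (hwR : Tendsto (fun j => (w j : ℝ)) atTop atTop)
    (hnw2 : Tendsto (fun j => (n j : ℝ) / (w j:ℝ)^2) atTop (𝓝 (x^2)))
    (k : ℤ) :
    Tendsto (fun j => Ffun (n j) (w j) k) atTop
      (𝓝 (Real.exp (-(π^2 * (k:ℝ)^2 * x^2)/2))) := by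
  have hWne : ∀ j, ((w j : ℝ)) ≠ 0 := fun j => Nat.cast_ne_zero.2 (hwpos j).ne'
  have hev : ∀ᶠ j in atTop, 2*|(k:ℝ)| + 2 < (w j : ℝ) := hwR.eventually (eventually_gt_atTop _)
  have hcond : ∀ᶠ j in atTop, Ffun (n j) (w j) k = (Real.cos (π * k / (w j)))^(n j) := by
    filter_upwards [hev] with j hj
    rw [Ffun, if_pos]
    have hk : 2*|k| + 2 < (w j : ℤ) := by
      have : ((2*|k|+2 : ℤ) : ℝ) < ((w j : ℤ) : ℝ) := by push_cast; push_cast at hj; linarith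
      exact_mod_cast this
    rcases le_or_gt 0 k with h0 | h0
    · left
      refine ⟨h0, ?_⟩
      rw [abs_of_nonneg h0] at hk; omega
    · right
      refine ⟨h0, ?_⟩
      rw [abs_of_neg h0] at hk; omega
  rcases eq_or_ne k 0 with rfl | hk0
  · have heq : ∀ᶠ j in atTop, Ffun (n j) (w j) 0 = 1 := by
      filter_upwards [hcond] with j hj
      rw [hj]
      norm_num
    rw [show Real.exp (-(π^2 * ((0:ℤ):ℝ)^2 * x^2)/2) = 1 by norm_num]
    exact Tendsto.congr' (heq.mono fun j hj => hj.symm) tendsto_const_nhds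
  have hkR : ((k:ℝ)) ≠ 0 := Int.cast_ne_zero.2 hk0
  set t : ℕ → ℝ := fun j => π * k / (w j) with hht
  have htend0 : Tendsto t atTop (𝓝 0) := by
    have h1 : Tendsto (fun j => ((w j : ℝ))⁻¹) atTop (𝓝 0) := hwR.inv_tendsto_atTop
    have h2 := h1.const_mul (π * (k:ℝ))
    rw [mul_zero] at h2
    exact h2.congr fun j => by rw [hht]; ring
  have habs : Tendsto (fun j => |t j|) atTop (𝓝 0) := by
    have := htend0.abs; rwa [abs_zero] at this
  have hsmall : ∀ᶠ j in atTop, |t j| ≤ 1/2 := habs.eventually (eventually_le_nhds (by norm_num))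
  have hnR : Tendsto (fun j => (n j : ℝ)) atTop atTop := tendsto_natCast_atTop_atTop.comp hn
  have ht2 : ∀ j, (t j)^2 = π^2*(k:ℝ)^2/(w j:ℝ)^2 := by
    intro j; rw [hht]; field_simp
  have hnt2 : Tendsto (fun j => (n j : ℝ) * (t j)^2) atTop (𝓝 (π^2 * (k:ℝ)^2 * x^2)) := by
    have h3 := hnw2.const_mul (π^2 * (k:ℝ)^2)
    refine Tendsto.congr ?_ h3
    intro j
    rw [ht2 j]
    field_simp
  have hnt4 : Tendsto (fun j => (n j : ℝ) * (t j)^4) atTop (𝓝 0) := by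
    have hsq : Tendsto (fun j => (t j)^2) atTop (𝓝 0) := by
      have := htend0.mul htend0
      rw [mul_zero] at this
      exact this.congr fun j => (sq (t j)).symm
    have hmul := hnt2.mul hsq
    rw [mul_zero] at hmul
    exact hmul.congr fun j => by ring
  have hA : Tendsto (fun j => (n j : ℝ) * Real.log (Real.cos (t j))) atTop
      (𝓝 (-(π^2 * (k:ℝ)^2 * x^2)/2)) := by
    have hg : Tendsto (fun j => -((n j : ℝ)*(t j)^2)/2 - (n j : ℝ)*(t j)^4) atTop
        (𝓝 (-(π^2 * (k:ℝ)^2 * x^2)/2 - 0)) := (hnt2.neg.div_const 2).sub hnt4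
    have hu : Tendsto (fun j => -((n j : ℝ)*(t j)^2)/2 + (n j : ℝ)*(t j)^4) atTop
        (𝓝 (-(π^2 * (k:ℝ)^2 * x^2)/2 + 0)) := (hnt2.neg.div_const 2).add hnt4
    rw [sub_zero] at hg
    rw [add_zero] at hu
    refine tendsto_of_tendsto_of_tendsto_of_le_of_le' hg hu ?_ ?_
    · filter_upwards [hsmall] with j hj
      have hb := (log_cos_bounds hj).1
      have := mul_le_mul_of_nonneg_left hb (Nat.cast_nonneg (n j) : (0:ℝ) ≤ (n j:ℝ))
      nlinarith
    · filter_upwards [hsmall] with j hj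
      have hb := (log_cos_bounds hj).2
      have := mul_le_mul_of_nonneg_left hb (Nat.cast_nonneg (n j) : (0:ℝ) ≤ (n j:ℝ))
      nlinarith
  have hexp : Tendsto (fun j => Real.exp ((n j : ℝ) * Real.log (Real.cos (t j)))) atTop
      (𝓝 (Real.exp (-(π^2 * (k:ℝ)^2 * x^2)/2))) :=
    (Real.continuous_exp.tendsto _).comp hA
  refine Tendsto.congr' ?_ hexp
  filter_upwards [hcond, hsmall] with j hj hsm
  have hcpos : 0 < Real.cos (t j) := Real.cos_pos_of_le_one (le_trans hsm (by norm_num))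
  rw [Real.exp_nat_mul, Real.exp_log hcpos, hj]


/-- finite-size scaling of `Z_{n,w}(2,2)`: along any sequences with
`n_j → ∞`, `n_j` even and `√n_j / w_j → x > 0`, one has
`n_j^{1/2} 2^{−n_j} Z_{n_j,w_j}(2,2) → x Σ_{k∈ℤ} e^{−π²k²x²/2}`. -/
theorem Z_two_two_scaling (x : ℝ) (hx : 0 < x) (n w : ℕ → ℕ)
    (hne : ∀ j, Even (n j)) (hnpos : ∀ j, 0 < n j) (hwpos : ∀ j, 0 < w j)
    (hn : Tendsto n atTop atTop)
    (hx' : Tendsto (fun j => Real.sqrt (n j) / (w j : ℝ)) atTop (nhds x)) :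
    Tendsto
      (fun j => (n j : ℝ) ^ ((1 : ℝ) / 2) / 2 ^ (n j) * Z (n j) (w j) 2 2)
      atTop
      (nhds (x * ∑' k : ℤ,
        Real.exp (-(Real.pi ^ 2 * (k : ℝ) ^ 2 * x ^ 2) / 2))) := by
  have hWne : ∀ j, ((w j : ℝ)) ≠ 0 := fun j => Nat.cast_ne_zero.2 (hwpos j).ne'
  have hNne : ∀ j, ((n j : ℝ)) ≠ 0 := fun j => Nat.cast_ne_zero.2 (hnpos j).ne'
  have hsqn : ∀ j, Real.sqrt (n j) ≠ 0 := fun j => by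
    have : (0:ℝ) < (n j : ℝ) := by exact_mod_cast hnpos j
    positivity
  -- n/w² → x²
  have hnw2 : Tendsto (fun j => (n j : ℝ) / (w j:ℝ)^2) atTop (𝓝 (x^2)) := by
    have h1 := hx'.mul hx'
    rw [← sq x] at h1
    refine Tendsto.congr (fun j => ?_) h1
    rw [div_mul_div_comm, Real.mul_self_sqrt (Nat.cast_nonneg _), sq]
  -- √n → ∞
  have hnR : Tendsto (fun j => (n j : ℝ)) atTop atTop := tendsto_natCast_atTop_atTop.comp hn
  have hsqrtn : Tendsto (fun j => Real.sqrt (n j)) atTop atTop := by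
    have h1 : Tendsto (fun y : ℝ => y ^ ((1:ℝ)/2)) atTop atTop :=
      tendsto_rpow_atTop (by norm_num)
    have := h1.comp hnR
    refine this.congr fun j => ?_
    exact (Real.sqrt_eq_rpow _).symm
  -- w → ∞ (as reals)
  have hwR : Tendsto (fun j => (w j : ℝ)) atTop atTop := by
    have hinv : Tendsto (fun j => (Real.sqrt (n j) / (w j:ℝ))⁻¹) atTop (𝓝 x⁻¹) :=
      hx'.inv₀ hx.ne'
    have := hsqrtn.atTop_mul_pos (inv_pos.2 hx) hinv
    refine this.congr fun j => ?_
    rw [inv_div, mul_div_assoc', mul_comm, mul_div_assoc, div_self (hsqn j), mul_one]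
  -- limit of the tsum
  have htsum : Tendsto (fun j => ∑' k : ℤ, Ffun (n j) (w j) k) atTop
      (𝓝 (∑' k : ℤ, Real.exp (-(Real.pi ^ 2 * (k : ℝ) ^ 2 * x ^ 2) / 2))) := by
    refine tendsto_tsum_of_dominated_convergence
      (summable_gauss (π^2*x^2/12) (by positivity))
      (fun k => ptwise x hx n w hnpos hwpos hn hwR hnw2 k) ?_
    have hev : ∀ᶠ j in atTop, x^2/2 ≤ (n j : ℝ)/(w j:ℝ)^2 :=
      hnw2.eventually (eventually_ge_nhds (by nlinarith))
    filter_upwards [hev] with j hj k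
    exact Fbound x hx (n j) (w j) (hwpos j) hj k
  -- rewrite the prefactor expression
  have hmain : ∀ j, (n j : ℝ) ^ ((1 : ℝ) / 2) / 2 ^ (n j) * Z (n j) (w j) 2 2
      = (Real.sqrt (n j) / (w j : ℝ)) * ∑' k : ℤ, Ffun (n j) (w j) k := by
    intro j
    rw [Z_formula (hwpos j), sum_range_two_mul (n j) (w j) (hwpos j) (hne j),
      tsum_Ffun (n j) (w j) (hwpos j) (hne j), ← Real.sqrt_eq_rpow]
    have h2ne : ((2:ℝ)^(n j)) ≠ 0 := by positivity
    field_simp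
  refine Tendsto.congr (fun j => (hmain j).symm) ?_
  exact hx'.mul htsum
end
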